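/- arXiv:0707.0095 — 9 statements merged into one kernel-verified Lean document; each statement's English description precedes it below -/
import Mathlib

section
/- Let μ be a probability measure on ℝ with inverse distribution function G, and let p ∈ (0,1). Define Y₁(t) = G((1−p)t) and Y₂(t) = G(1−p+pt) for t ∈ (0,1), and δ⁺_p(t) = Y₂(t) − Y₁(t). Then the pushforward, under the map (t,η) ↦ Y₁(t) + δ⁺_p(t)·η, of the product of Lebesgue measure on (0,1) with the Bernoulli measure (1−p)·δ₀ + p·δ₁ on {0,1}, equals μ. In particular, if t is uniformly distributed on (0,1) and η is an independent {0,1}-valued Bernoulli variable with P(η=1)=p, then Y₁(t) + δ⁺_p(t)·η has distribution μ. -/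
open MeasureTheory Set

/-- The inverse distribution function `G(t) = inf {u : μ((-∞,u]) ≥ t}`. -/
noncomputable def invCDF (μ : Measure ℝ) (t : ℝ) : ℝ :=
  sInf {u : ℝ | t ≤ (μ (Iic u)).toReal}

/-- The Bernoulli measure on `{0,1} ⊆ ℝ` with `P({1}) = p`. -/
noncomputable def bernoulliMeasure (p : ℝ) : Measure ℝ :=
  ENNReal.ofReal (1 - p) • Measure.dirac (0:ℝ) + ENNReal.ofReal p • Measure.dirac (1:ℝ)

open Filter ProbabilityTheory Topology
open scoped ENNReal

section Aux

variable (μ : Measure ℝ) [IsProbabilityMeasure μ]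

lemma invCDF_eq_cdf (t : ℝ) : invCDF μ t = sInf {u : ℝ | t ≤ cdf μ u} := by
  simp only [invCDF, cdf_eq_real, measureReal_def]

lemma invCDF_le_iff {t : ℝ} (ht : t ∈ Ioo (0:ℝ) 1) (x : ℝ) :
    invCDF μ t ≤ x ↔ t ≤ cdf μ x := by
  rw [invCDF_eq_cdf]
  have hne : {u : ℝ | t ≤ cdf μ u}.Nonempty := by
    obtain ⟨u, hu⟩ := ((tendsto_cdf_atTop μ).eventually (eventually_gt_nhds ht.2)).exists
    exact ⟨u, hu.le⟩
  have hbdd : BddBelow {u : ℝ | t ≤ cdf μ u} := by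
    obtain ⟨u₀, hu₀⟩ := ((tendsto_cdf_atBot μ).eventually (eventually_lt_nhds ht.1)).exists
    refine ⟨u₀, fun u hu => ?_⟩
    by_contra hlt
    exact absurd (hu.trans (monotone_cdf μ (le_of_lt (not_le.1 hlt)))) (not_le.2 hu₀)
  constructor
  · intro h
    have key : ∀ u, x < u → t ≤ cdf μ u := by
      intro u hu
      obtain ⟨v, hv, hvu⟩ := exists_lt_of_csInf_lt hne (lt_of_le_of_lt h hu)
      exact hv.trans (monotone_cdf μ hvu.le)
    have htend : Tendsto (cdf μ) (𝓝[>] x) (𝓝 (cdf μ x)) :=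
      ((cdf μ).right_continuous x).tendsto.mono_left
        (nhdsWithin_mono x Ioi_subset_Ici_self)
    exact ge_of_tendsto htend (eventually_mem_nhdsWithin.mono fun u hu => key u hu)
  · intro h
    exact csInf_le hbdd h

lemma invCDF_of_nonpos {t : ℝ} (ht : t ≤ 0) : invCDF μ t = 0 := by
  have hset : {u : ℝ | t ≤ (μ (Iic u)).toReal} = univ :=
    eq_univ_of_forall fun u => ht.trans ENNReal.toReal_nonneg
  rw [invCDF, hset]
  apply Real.sInf_of_not_bddBelow
  rintro ⟨b, hb⟩
  have := hb (mem_univ (b - 1))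
  linarith

lemma invCDF_of_one_lt {t : ℝ} (ht : 1 < t) : invCDF μ t = 0 := by
  have hset : {u : ℝ | t ≤ (μ (Iic u)).toReal} = ∅ := by
    refine eq_empty_of_forall_notMem fun u hu => ?_
    have h1 : (μ (Iic u)).toReal ≤ 1 := by
      have := prob_le_one (μ := μ) (s := Iic u)
      simpa using ENNReal.toReal_mono ENNReal.one_ne_top this
    exact absurd (hu.trans h1) (not_le.2 ht)
  rw [invCDF, hset, Real.sInf_empty]

lemma measurable_invCDF : Measurable (invCDF μ) := by
  apply measurable_of_Iic
  intro x
  have hset : ∀ t : ℝ, invCDF μ t ≤ x ↔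
      ((t ≤ 0 ∧ 0 ≤ x) ∨ (t ∈ Ioo (0:ℝ) 1 ∧ t ≤ cdf μ x) ∨ (t = 1 ∧ invCDF μ 1 ≤ x)
        ∨ (1 < t ∧ 0 ≤ x)) := by
    intro t
    rcases le_or_gt t 0 with h0 | h0
    · rw [invCDF_of_nonpos μ h0]
      constructor
      · exact fun h => Or.inl ⟨h0, h⟩
      · rintro (⟨_, h⟩ | ⟨⟨h1, _⟩, _⟩ | ⟨h1, _⟩ | ⟨h1, _⟩) <;> first | exact h | linarith
    · rcases lt_trichotomy t 1 with h1 | h1 | h1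
      · rw [invCDF_le_iff μ ⟨h0, h1⟩]
        constructor
        · exact fun h => Or.inr (Or.inl ⟨⟨h0, h1⟩, h⟩)
        · rintro (⟨h2, _⟩ | ⟨_, h⟩ | ⟨h2, _⟩ | ⟨h2, _⟩) <;> first | exact h | linarith
      · subst h1
        constructor
        · exact fun h => Or.inr (Or.inr (Or.inl ⟨rfl, h⟩))
        · rintro (⟨h2, _⟩ | ⟨⟨_, h2⟩, _⟩ | ⟨_, h⟩ | ⟨h2, _⟩) <;> first | exact h | linarith
      · rw [invCDF_of_one_lt μ h1]
        constructor
        · exact fun h => Or.inr (Or.inr (Or.inr ⟨h1, h⟩))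
        · rintro (⟨h2, _⟩ | ⟨⟨_, h2⟩, _⟩ | ⟨h2, _⟩ | ⟨_, h⟩) <;> first | exact h | linarith
  have : invCDF μ ⁻¹' Iic x =
      (Iic 0 ∩ {t : ℝ | 0 ≤ x}) ∪ ((Ioo 0 1 ∩ Iic (cdf μ x)) ∪
        (({1} : Set ℝ) ∩ {t : ℝ | invCDF μ 1 ≤ x} ∪ (Ioi 1 ∩ {t : ℝ | 0 ≤ x}))) := by
    ext t
    simp only [mem_preimage, mem_Iic, hset t, mem_union, mem_inter_iff, mem_setOf_eq,
      mem_Ioo, mem_Ioi, mem_singleton_iff]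
    try tauto
  rw [this]
  exact (measurableSet_Iic.inter (MeasurableSet.const _)).union
    (((measurableSet_Ioo.inter measurableSet_Iic)).union
      (((measurableSet_singleton 1).inter (MeasurableSet.const _)).union
        (measurableSet_Ioi.inter (MeasurableSet.const _))))

lemma vol_Iic_inter_Ioo (c : ℝ) :
    volume (Iic c ∩ Ioo (0:ℝ) 1) = ENNReal.ofReal (min c 1) := by
  rcases lt_or_ge c 1 with hc | hc
  · have : Iic c ∩ Ioo (0:ℝ) 1 = Ioc 0 c := by
      ext t
      simp only [mem_inter_iff, mem_Iic, mem_Ioo, mem_Ioc]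
      constructor
      · rintro ⟨h1, h2, h3⟩; exact ⟨h2, h1⟩
      · rintro ⟨h1, h2⟩; exact ⟨h2, h1, lt_of_le_of_lt h2 hc⟩
    rw [this, Real.volume_Ioc, min_eq_left hc.le, sub_zero]
  · have : Iic c ∩ Ioo (0:ℝ) 1 = Ioo 0 1 := by
      refine inter_eq_self_of_subset_right fun t ht => ?_
      exact le_trans ht.2.le hc
    rw [this, Real.volume_Ioo, min_eq_right hc]
    norm_num

end Aux

lemma prod_smul_right {α β : Type*} [MeasurableSpace α] [MeasurableSpace β]
    (μ : Measure α) (ν : Measure β) [SFinite ν] (c : ℝ≥0∞) :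
    μ.prod (c • ν) = c • μ.prod ν := by
  ext s hs
  rw [Measure.prod_apply hs, Measure.smul_apply, Measure.prod_apply hs, smul_eq_mul,
    ← lintegral_const_mul c (measurable_measure_prodMk_left hs)]
  simp [Measure.smul_apply, smul_eq_mul]

/-- Bernoulli decomposition via the "chasing Pac-Men" construction:
if `t` is uniform on `(0,1)` and `η` is an independent Bernoulli(p) variable, then
`Y₁(t) + δ⁺_p(t) η` has distribution `μ`, where `Y₁(t) = G((1-p)t)` and
`δ⁺_p(t) = G(1-p+pt) - G((1-p)t)`. -/
theorem bernoulli_decomposition_plus (μ : Measure ℝ) [IsProbabilityMeasure μ]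
    (p : ℝ) (hp : p ∈ Ioo (0:ℝ) 1) :
    Measure.map
      (fun q : ℝ × ℝ =>
        invCDF μ ((1 - p) * q.1) +
          (invCDF μ (1 - p + p * q.1) - invCDF μ ((1 - p) * q.1)) * q.2)
      ((volume.restrict (Ioo (0:ℝ) 1)).prod (bernoulliMeasure p)) = μ := by
  obtain ⟨hp0, hp1⟩ := hp
  have hp0' : (0:ℝ) < 1 - p := by linarith
  set ν := volume.restrict (Ioo (0:ℝ) 1) with hν
  set f : ℝ × ℝ → ℝ := fun q =>
    invCDF μ ((1 - p) * q.1) +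
      (invCDF μ (1 - p + p * q.1) - invCDF μ ((1 - p) * q.1)) * q.2 with hfdef
  have hG := measurable_invCDF μ
  have hm1 : Measurable fun q : ℝ × ℝ => invCDF μ ((1 - p) * q.1) :=
    hG.comp (measurable_fst.const_mul (1 - p))
  have hm2 : Measurable fun q : ℝ × ℝ => invCDF μ (1 - p + p * q.1) :=
    hG.comp ((measurable_fst.const_mul p).const_add (1 - p))
  have hf : Measurable f := hm1.add ((hm2.sub hm1).mul measurable_snd)
  have hG1 : Measurable fun t : ℝ => invCDF μ ((1 - p) * t) :=
    hG.comp (measurable_id.const_mul (1 - p))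
  have hG2 : Measurable fun t : ℝ => invCDF μ (1 - p + p * t) :=
    hG.comp ((measurable_id.const_mul p).const_add (1 - p))
  -- decompose the product measure
  have hprod : ν.prod (bernoulliMeasure p) =
      ENNReal.ofReal (1 - p) • Measure.map (fun t : ℝ => (t, (0:ℝ))) ν +
        ENNReal.ofReal p • Measure.map (fun t : ℝ => (t, (1:ℝ))) ν := by
    rw [_root_.bernoulliMeasure.eq_1, Measure.prod_add, prod_smul_right, prod_smul_right,
      Measure.prod_dirac, Measure.prod_dirac]
  have hpair0 : Measurable fun t : ℝ => (t, (0:ℝ)) := measurable_id.prodMk measurable_const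
  have hpair1 : Measurable fun t : ℝ => (t, (1:ℝ)) := measurable_id.prodMk measurable_const
  have hmap : Measure.map f (ν.prod (bernoulliMeasure p)) =
      ENNReal.ofReal (1 - p) • Measure.map (fun t : ℝ => invCDF μ ((1 - p) * t)) ν +
        ENNReal.ofReal p • Measure.map (fun t : ℝ => invCDF μ (1 - p + p * t)) ν := by
    have hc0 : f ∘ (fun t : ℝ => (t, (0:ℝ))) = fun t : ℝ => invCDF μ ((1 - p) * t) := by
      funext t; simp [hfdef]
    have hc1 : f ∘ (fun t : ℝ => (t, (1:ℝ))) = fun t : ℝ => invCDF μ (1 - p + p * t) := by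
      funext t; simp [hfdef]
    rw [hprod, Measure.map_add _ _ hf, Measure.map_smul, Measure.map_smul,
      Measure.map_map hf hpair0, Measure.map_map hf hpair1, hc0, hc1]
  rw [hmap]
  -- both sides are finite measures; compare on Iic
  have hfin : IsFiniteMeasure
      (ENNReal.ofReal (1 - p) • Measure.map (fun t : ℝ => invCDF μ ((1 - p) * t)) ν +
        ENNReal.ofReal p • Measure.map (fun t : ℝ => invCDF μ (1 - p + p * t)) ν) := by
    constructor
    have h1 : Measure.map (fun t : ℝ => invCDF μ ((1 - p) * t)) ν univ ≤ 1 := by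
      rw [Measure.map_apply hG1 MeasurableSet.univ]
      simpa [hν] using measure_mono (subset_univ _) |>.trans_eq (by simp [Real.volume_Ioo])
    have h2 : Measure.map (fun t : ℝ => invCDF μ (1 - p + p * t)) ν univ ≤ 1 := by
      rw [Measure.map_apply hG2 MeasurableSet.univ]
      simpa [hν] using measure_mono (subset_univ _) |>.trans_eq (by simp [Real.volume_Ioo])
    calc _ ≤ ENNReal.ofReal (1 - p) * 1 + ENNReal.ofReal p * 1 := by
            simp only [Measure.add_apply, Measure.smul_apply, smul_eq_mul]
            exact add_le_add (by gcongr) (by gcongr)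
      _ < ⊤ := by simp [ENNReal.add_lt_top, ENNReal.mul_lt_top, ENNReal.ofReal_lt_top]
  refine @Measure.ext_of_Iic ℝ _ _ _ _ _ _ _ _ hfin fun x => ?_
  have hF0 : 0 ≤ cdf μ x := cdf_nonneg μ x
  have hF1 : cdf μ x ≤ 1 := cdf_le_one μ x
  -- compute the first piece
  have hpre1 : (fun t : ℝ => invCDF μ ((1 - p) * t)) ⁻¹' Iic x ∩ Ioo 0 1 =
      Iic (cdf μ x / (1 - p)) ∩ Ioo 0 1 := by
    ext t
    simp only [mem_inter_iff, mem_preimage, mem_Iic, mem_Ioo, and_congr_left_iff]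
    rintro ⟨ht0, ht1⟩
    have hmem : (1 - p) * t ∈ Ioo (0:ℝ) 1 :=
      ⟨mul_pos hp0' ht0, by nlinarith⟩
    rw [invCDF_le_iff μ hmem, le_div_iff₀ hp0', mul_comm]
  have hpre2 : (fun t : ℝ => invCDF μ (1 - p + p * t)) ⁻¹' Iic x ∩ Ioo 0 1 =
      Iic ((cdf μ x - (1 - p)) / p) ∩ Ioo 0 1 := by
    ext t
    simp only [mem_inter_iff, mem_preimage, mem_Iic, mem_Ioo, and_congr_left_iff]
    rintro ⟨ht0, ht1⟩
    have hmem : 1 - p + p * t ∈ Ioo (0:ℝ) 1 :=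
      ⟨by nlinarith, by nlinarith⟩
    rw [invCDF_le_iff μ hmem, le_div_iff₀ hp0]
    constructor <;> intro h <;> nlinarith
  have hval1 : Measure.map (fun t : ℝ => invCDF μ ((1 - p) * t)) ν (Iic x) =
      ENNReal.ofReal (min (cdf μ x / (1 - p)) 1) := by
    rw [Measure.map_apply hG1 measurableSet_Iic, hν,
      Measure.restrict_apply (hG1 measurableSet_Iic), hpre1, vol_Iic_inter_Ioo]
  have hval2 : Measure.map (fun t : ℝ => invCDF μ (1 - p + p * t)) ν (Iic x) =
      ENNReal.ofReal (min ((cdf μ x - (1 - p)) / p) 1) := by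
    rw [Measure.map_apply hG2 measurableSet_Iic, hν,
      Measure.restrict_apply (hG2 measurableSet_Iic), hpre2, vol_Iic_inter_Ioo]
  rw [Measure.add_apply, Measure.smul_apply, Measure.smul_apply, hval1, hval2,
    smul_eq_mul, smul_eq_mul, ← ENNReal.ofReal_mul hp0'.le, ← ENNReal.ofReal_mul hp0.le,
    ← ofReal_cdf μ x]
  have e1 : (1 - p) * min (cdf μ x / (1 - p)) 1 = min (cdf μ x) (1 - p) := by
    rw [mul_min_of_nonneg _ _ hp0'.le, mul_div_cancel₀ _ (ne_of_gt hp0'), mul_one]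
  have e2 : p * min ((cdf μ x - (1 - p)) / p) 1 = cdf μ x - (1 - p) := by
    rw [mul_min_of_nonneg _ _ hp0.le, mul_div_cancel₀ _ (ne_of_gt hp0), mul_one]
    exact min_eq_left (by linarith)
  rw [e1, e2]
  rcases le_or_gt (cdf μ x) (1 - p) with hc | hc
  · rw [min_eq_left hc,
      ENNReal.ofReal_of_nonpos (show cdf μ x - (1 - p) ≤ 0 by linarith), add_zero]
  · rw [min_eq_right hc.le, ← ENNReal.ofReal_add (by linarith) (by linarith)]
    congr 1
    ring
end

section
/- Let μ be a non-degenerate probability measure on ℝ (i.e. μ is not a Dirac mass at a single point) with inverse distribution function G. Then there exists at least one p ∈ (0,1) such that β⁺(p,μ) := inf_{t∈(0,1)} ( G(1−p+pt) − G((1−p)t) ) > 0. -/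
open MeasureTheory Set

/-- `β⁺(p,μ) = inf_{t ∈ (0,1)} (G(1-p+pt) - G((1-p)t))`. -/
noncomputable def betaPlus (μ : Measure ℝ) (p : ℝ) : ℝ :=
  ⨅ t : Ioo (0:ℝ) 1, (invCDF μ (1 - p + p * t.1) - invCDF μ ((1 - p) * t.1))

open Filter ProbabilityTheory
open scoped Topology

lemma invCDF_eq_sInf_cdf (μ : Measure ℝ) [IsProbabilityMeasure μ] (t : ℝ) :
    invCDF μ t = sInf {u : ℝ | t ≤ cdf μ u} := by
  unfold invCDF
  congr 1
  ext u
  simp [cdf_eq_real, measureReal_def]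

lemma bddBelow_invCDF_set (μ : Measure ℝ) [IsProbabilityMeasure μ] {t : ℝ} (ht : 0 < t) :
    BddBelow {u : ℝ | t ≤ cdf μ u} := by
  obtain ⟨M, hM⟩ : ∃ M, cdf μ M < t := ((tendsto_cdf_atBot μ).eventually_lt_const ht).exists
  refine ⟨M, fun u hu => ?_⟩
  by_contra hc
  push_neg at hc
  exact absurd (le_trans hu (monotone_cdf μ hc.le)) (not_le.mpr hM)

lemma nonempty_invCDF_set (μ : Measure ℝ) [IsProbabilityMeasure μ] {t : ℝ} (ht : t < 1) :
    {u : ℝ | t ≤ cdf μ u}.Nonempty := by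
  obtain ⟨u, hu⟩ : ∃ u, t < cdf μ u := ((tendsto_cdf_atTop μ).eventually_const_lt ht).exists
  exact ⟨u, hu.le⟩

lemma invCDF_mono (μ : Measure ℝ) [IsProbabilityMeasure μ] {s t : ℝ}
    (h0 : 0 < s) (h1 : t < 1) (hst : s ≤ t) : invCDF μ s ≤ invCDF μ t := by
  rw [invCDF_eq_sInf_cdf, invCDF_eq_sInf_cdf]
  exact csInf_le_csInf (bddBelow_invCDF_set μ h0) (nonempty_invCDF_set μ h1)
    (fun u hu => le_trans hst hu)

lemma exists_cdf_mem_Ioo (μ : Measure ℝ) [IsProbabilityMeasure μ]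
    (hnd : ∀ x : ℝ, μ ≠ Measure.dirac x) :
    ∃ x : ℝ, 0 < cdf μ x ∧ cdf μ x < 1 := by
  by_contra h
  push_neg at h
  have h01 : ∀ x : ℝ, cdf μ x = 0 ∨ cdf μ x = 1 := by
    intro x
    rcases lt_or_ge 0 (cdf μ x) with hx | hx
    · exact Or.inr (le_antisymm (cdf_le_one μ x) (h x hx))
    · exact Or.inl (le_antisymm hx (cdf_nonneg μ x))
  set S : Set ℝ := {x | cdf μ x = 1} with hS
  have hSne : S.Nonempty := by
    obtain ⟨x, hx⟩ : ∃ x, (1:ℝ)/2 < cdf μ x :=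
      ((tendsto_cdf_atTop μ).eventually_const_lt (by norm_num)).exists
    refine ⟨x, ?_⟩
    rcases h01 x with h0 | h1
    · rw [h0] at hx; norm_num at hx
    · exact h1
  have hSbdd : BddBelow S := by
    obtain ⟨M, hM⟩ : ∃ M, cdf μ M < 1/2 :=
      ((tendsto_cdf_atBot μ).eventually_lt_const (by norm_num)).exists
    refine ⟨M, fun x hx => ?_⟩
    by_contra hc
    push_neg at hc
    have := monotone_cdf μ hc.le
    rw [hx] at this
    linarith
  set m := sInf S with hm
  have hgt : ∀ y, m < y → cdf μ y = 1 := by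
    intro y hy
    obtain ⟨s, hsS, hsy⟩ := exists_lt_of_csInf_lt hSne hy
    have : cdf μ s ≤ cdf μ y := monotone_cdf μ hsy.le
    rw [hsS] at this
    exact le_antisymm (cdf_le_one μ y) this
  have hcdfm : cdf μ m = 1 := by
    have hc : ContinuousWithinAt (cdf μ) (Ioi m) m :=
      ((cdf μ).right_continuous m).mono Ioi_subset_Ici_self
    have h2 : Tendsto (cdf μ) (𝓝[>] m) (𝓝 1) := by
      refine Tendsto.congr' ?_ tendsto_const_nhds
      filter_upwards [self_mem_nhdsWithin] with y hy
      exact (hgt y hy).symm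
    exact tendsto_nhds_unique hc h2
  have hlt : ∀ y, y < m → cdf μ y = 0 := by
    intro y hy
    rcases h01 y with h0 | h1
    · exact h0
    · exact absurd (csInf_le hSbdd h1) (not_le.mpr hy)
  have hIicm : μ (Iic m) = 1 := by
    have := (cdf_eq_real μ m).trans (measureReal_def _ _)
    rw [hcdfm] at this
    have h2 := this.symm
    rw [ENNReal.toReal_eq_one_iff] at h2
    exact h2
  have hIicy : ∀ y, y < m → μ (Iic y) = 0 := by
    intro y hy
    have := (cdf_eq_real μ y).trans (measureReal_def _ _)
    rw [hlt y hy] at this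
    have hne : μ (Iic y) ≠ ⊤ := measure_ne_top μ _
    rcases (ENNReal.toReal_eq_zero_iff _).mp this.symm with h | h
    · exact h
    · exact absurd h hne
  have hIio : μ (Iio m) = 0 := by
    have hsub : Iio m ⊆ ⋃ n : ℕ, Iic (m - ((n:ℝ)+1)⁻¹) := by
      intro y hy
      obtain ⟨n, hn⟩ := exists_nat_gt (m - y)⁻¹
      refine mem_iUnion.mpr ⟨n, ?_⟩
      have hmy : 0 < m - y := by simp only [mem_Iio] at hy; linarith
      have h1 : ((n:ℝ)+1)⁻¹ < m - y := by
        rw [inv_lt_comm₀ (by positivity) hmy]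
        calc (m - y)⁻¹ < (n:ℝ) := hn
        _ < (n:ℝ) + 1 := by linarith
      simp only [mem_Iic]
      linarith
    refine le_antisymm ?_ (zero_le)
    refine le_trans (measure_mono hsub) ?_
    rw [measure_iUnion_null]
    intro n
    refine hIicy _ ?_
    have : (0:ℝ) < ((n:ℝ)+1)⁻¹ := by positivity
    linarith
  have hIoi : μ (Ioi m) = 0 := by
    have := measure_compl (measurableSet_Iic (a := m)) (measure_ne_top μ _)
    rw [compl_Iic, hIicm, measure_univ] at this
    simpa using this
  have hcompl : μ ({m}ᶜ) = 0 := by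
    have hsub : ({m}ᶜ : Set ℝ) ⊆ Iio m ∪ Ioi m := by
      intro y hy
      rcases lt_trichotomy y m with h | h | h
      · exact Or.inl h
      · exact absurd h hy
      · exact Or.inr h
    exact measure_mono_null hsub (measure_union_null hIio hIoi)
  refine hnd m ?_
  refine Measure.ext fun s hs => ?_
  rw [Measure.dirac_apply' m hs]
  by_cases hmem : m ∈ s
  · rw [indicator_of_mem hmem]
    have hsc : μ sᶜ = 0 := measure_mono_null (fun y hy => by
      simp only [mem_compl_iff, mem_singleton_iff] at *
      exact fun h => hy (h ▸ hmem)) hcompl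
    have := measure_compl hs (measure_ne_top μ s)
    rw [hsc, measure_univ] at this
    have h1 : 1 ≤ μ s := by
      rwa [eq_comm, tsub_eq_zero_iff_le] at this
    exact le_antisymm prob_le_one h1
  · have hs0 : μ s = 0 := measure_mono_null (fun y hy => by
      simp only [mem_compl_iff, mem_singleton_iff]
      exact fun h => hmem (h ▸ hy)) hcompl
    rw [hs0, indicator_of_notMem hmem]

lemma exists_invCDF_lt (μ : Measure ℝ) [IsProbabilityMeasure μ]
    (hnd : ∀ x : ℝ, μ ≠ Measure.dirac x) :
    ∃ t₁ t₂ : ℝ, 0 < t₁ ∧ t₁ < t₂ ∧ t₂ < 1 ∧ invCDF μ t₁ < invCDF μ t₂ := by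
  obtain ⟨x, hx0, hx1⟩ := exists_cdf_mem_Ioo μ hnd
  set t₁ := cdf μ x with ht₁
  set t₂ := (1 + t₁)/2 with ht₂
  have ht₁₂ : t₁ < t₂ := by rw [ht₂]; linarith
  have ht₂1 : t₂ < 1 := by rw [ht₂]; linarith
  refine ⟨t₁, t₂, hx0, ht₁₂, ht₂1, ?_⟩
  have hle : invCDF μ t₁ ≤ x := by
    rw [invCDF_eq_sInf_cdf]
    exact csInf_le (bddBelow_invCDF_set μ hx0) (le_refl t₁)
  -- find y > x with cdf μ y < t₂
  have hc : ContinuousWithinAt (cdf μ) (Ioi x) x :=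
    ((cdf μ).right_continuous x).mono Ioi_subset_Ici_self
  have hev : ∀ᶠ y in 𝓝[>] x, cdf μ y < t₂ := hc.eventually_lt_const ht₁₂
  obtain ⟨y, hy2, hyx⟩ := (hev.and self_mem_nhdsWithin).exists
  have hlt : x < invCDF μ t₂ := by
    rw [invCDF_eq_sInf_cdf]
    refine lt_of_lt_of_le hyx (le_csInf (nonempty_invCDF_set μ ht₂1) ?_)
    intro u hu
    by_contra hcu
    push_neg at hcu
    exact absurd (le_trans hu (monotone_cdf μ hcu.le)) (not_le.mpr hy2)
  exact lt_of_le_of_lt hle hlt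

/-- For any non-degenerate probability measure `μ` on `ℝ` there exists `p ∈ (0,1)`
with `β⁺(p,μ) > 0`. -/
theorem exists_betaPlus_pos (μ : Measure ℝ) [IsProbabilityMeasure μ]
    (hnd : ∀ x : ℝ, μ ≠ Measure.dirac x) :
    ∃ p ∈ Ioo (0:ℝ) 1, 0 < betaPlus μ p := by
  obtain ⟨t₁, t₂, ht₁0, ht₁₂, ht₂1, hG⟩ := exists_invCDF_lt μ hnd
  have ht₁1 : t₁ < 1 := ht₁₂.trans ht₂1
  have ht₂0 : 0 < t₂ := ht₁0.trans ht₁₂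
  set G := invCDF μ with hGdef
  set v : ℝ := (G t₁ + G t₂)/2 with hv
  have hv1 : G t₁ < v := by rw [hv]; linarith
  have hv2 : v < G t₂ := by rw [hv]; linarith
  set A : Set ℝ := {s | s ∈ Ioo (0:ℝ) 1 ∧ G s ≤ v} with hA
  have hub : ∀ s ∈ A, s ≤ t₂ := by
    intro s hs
    by_contra hcs
    push_neg at hcs
    have : G t₂ ≤ G s := invCDF_mono μ ht₂0 hs.1.2 hcs.le
    have : G t₂ ≤ v := this.trans hs.2
    linarith
  have hAne : A.Nonempty := ⟨t₁, ⟨⟨ht₁0, ht₁1⟩, hv1.le⟩⟩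
  have hAbdd : BddAbove A := ⟨t₂, hub⟩
  set c : ℝ := sSup A with hc
  have hct₁ : t₁ ≤ c := le_csSup hAbdd ⟨⟨ht₁0, ht₁1⟩, hv1.le⟩
  have hct₂ : c ≤ t₂ := csSup_le hAne hub
  have hc0 : 0 < c := ht₁0.trans_le hct₁
  have hc1 : c < 1 := hct₂.trans_lt ht₂1
  have hP1 : ∀ s, 0 < s → s < c → G s ≤ v := by
    intro s hs0 hsc
    obtain ⟨s', hs'A, hss'⟩ := exists_lt_of_lt_csSup hAne hsc
    exact (invCDF_mono μ hs0 hs'A.1.2 hss'.le).trans hs'A.2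
  have hP2 : ∀ s, c < s → s < 1 → v < G s := by
    intro s hcs hs1
    by_contra hle
    push_neg at hle
    exact absurd (le_csSup hAbdd ⟨⟨hc0.trans hcs, hs1⟩, hle⟩) (not_le.mpr hcs)
  set B : Set ℝ := {s | s ∈ Ioo (0:ℝ) 1 ∧ v ≤ G s} with hB
  have hBne : B.Nonempty := ⟨t₂, ⟨⟨ht₂0, ht₂1⟩, hv2.le⟩⟩
  have hBbdd : BddBelow B := ⟨0, fun s hs => hs.1.1.le⟩
  set w : ℝ := sInf B with hw
  have hwt₁ : t₁ ≤ w := by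
    refine le_csInf hBne ?_
    intro s hs
    by_contra hcs
    push_neg at hcs
    have : G s ≤ G t₁ := invCDF_mono μ hs.1.1 ht₁1 hcs.le
    have : G s < v := this.trans_lt hv1
    exact absurd hs.2 (not_le.mpr this)
  have hwt₂ : w ≤ t₂ := csInf_le hBbdd ⟨⟨ht₂0, ht₂1⟩, hv2.le⟩
  have hw0 : 0 < w := ht₁0.trans_le hwt₁
  have hP3 : ∀ s, 0 < s → s < w → G s < v := by
    intro s hs0 hsw
    have hs1 : s < 1 := hsw.trans (hwt₂.trans_lt ht₂1)
    by_contra hle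
    push_neg at hle
    exact absurd (csInf_le hBbdd ⟨⟨hs0, hs1⟩, hle⟩) (not_le.mpr hsw)
  have hwc : w ≤ c := by
    by_contra hcw
    push_neg at hcw
    set σ : ℝ := (c + w)/2 with hσ
    have hσ1 : σ < 1 := by
      have : σ < w := by rw [hσ]; linarith
      exact this.trans (hwt₂.trans_lt ht₂1)
    have h1 : v < G σ := hP2 σ (by rw [hσ]; linarith) hσ1
    have h2 : G σ < v := hP3 σ (by rw [hσ]; linarith) (by rw [hσ]; linarith)
    linarith
  -- thresholds
  set θ : ℝ := w / (2 * c) with hθ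
  have hθ0 : 0 < θ := by positivity
  have hθ1 : θ < 1 := by
    rw [hθ, div_lt_one (by positivity)]
    linarith
  set m : ℝ := w / 2 with hmdef
  have hcθ : c * θ = m := by
    rw [hθ, hmdef]; field_simp
  have hm0 : 0 < m := by positivity
  have hmw : m < w := by rw [hmdef]; linarith
  have hm1 : m < 1 := hmw.trans (hwt₂.trans_lt ht₂1)
  set r : ℝ := c + (1 - c) * θ with hrdef
  have hrc : c < r := by
    have : 0 < (1 - c) * θ := mul_pos (by linarith) hθ0
    rw [hrdef]; linarith
  have hr1 : r < 1 := by
    rw [hrdef]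
    nlinarith [mul_lt_mul_of_pos_left hθ1 (show (0:ℝ) < 1 - c by linarith)]
  have hGm : G m < v := hP3 m hm0 hmw
  have hGr : v < G r := hP2 r hrc hr1
  set ε : ℝ := min (v - G m) (G r - v) with hε
  have hε0 : 0 < ε := lt_min (by linarith) (by linarith)
  set p : ℝ := 1 - c with hp
  refine ⟨p, ⟨by rw [hp]; linarith, by rw [hp]; linarith⟩, ?_⟩
  have hkey : ∀ t : Ioo (0:ℝ) 1,
      ε ≤ invCDF μ (1 - p + p * t.1) - invCDF μ ((1 - p) * t.1) := by
    rintro ⟨t, ht0, ht1⟩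
    have h1p : 1 - p = c := by rw [hp]; ring
    simp only [h1p]
    have hl0 : 0 < c * t := by positivity
    have hlc : c * t < c := by nlinarith
    have hrac : c < c + p * t := by
      have : 0 < p * t := mul_pos (by rw [hp]; linarith) ht0
      linarith
    have hra1 : c + p * t < 1 := by
      rw [hp]; nlinarith
    rcases le_total t θ with hcase | hcase
    · -- left arg ≤ m, right arg > c
      have hlm : c * t ≤ m := by
        rw [← hcθ]
        exact mul_le_mul_of_nonneg_left hcase hc0.le
      have hGl : G (c * t) ≤ G m := invCDF_mono μ hl0 hm1 hlm
      have hGra : v < G (c + p * t) := hP2 _ hrac hra1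
      have : ε ≤ v - G m := min_le_left _ _
      have hsub : v - G m ≤ G (c + p * t) - G (c * t) := by
        have := hGra.le
        linarith
      linarith
    · -- right arg ≥ r, left arg < c
      have hrar : r ≤ c + p * t := by
        rw [hrdef, hp]
        have := mul_le_mul_of_nonneg_left hcase (show (0:ℝ) ≤ 1 - c by linarith)
        linarith
      have hGra : G r ≤ G (c + p * t) := invCDF_mono μ (hc0.trans hrc) hra1 hrar
      have hGl : G (c * t) ≤ v := hP1 _ hl0 hlc
      have : ε ≤ G r - v := min_le_right _ _
      linarith
  have hne : Nonempty (Ioo (0:ℝ) 1) := ⟨⟨1/2, by norm_num, by norm_num⟩⟩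
  have : ε ≤ betaPlus μ p := le_ciInf hkey
  linarith
end

section
/- Let μ be a probability measure on ℝ with inverse distribution function G. Suppose x₋ < x₊ are real numbers and p₋, p₊ > 0 are such that μ((-∞,x₋]) ≥ p₋ and μ((x₊,∞)) > p₊. Then, with p = p₊/(p₋+p₊) and δ⁻_p(t) = G(1−pt) − G((1−p)t), the Lebesgue measure of the set { t ∈ (0,1) : δ⁻_p(t) > x₊ − x₋ } is at least p₋ + p₊. -/
open MeasureTheory Set ProbabilityTheory Filter
open scoped Topology

lemma invCDF_set_eq (μ : Measure ℝ) [IsProbabilityMeasure μ] (t : ℝ) :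
    {u : ℝ | t ≤ (μ (Iic u)).toReal} = {u : ℝ | t ≤ cdf μ u} := by
  ext u; simp [cdf_eq_real, measureReal_def]

lemma invCDF_bddBelow (μ : Measure ℝ) [IsProbabilityMeasure μ] {t : ℝ} (ht : 0 < t) :
    BddBelow {u : ℝ | t ≤ (μ (Iic u)).toReal} := by
  rw [invCDF_set_eq]
  obtain ⟨u₀, hu₀⟩ := ((tendsto_cdf_atBot μ).eventually_lt_const ht).exists
  exact ⟨u₀, fun u hu => le_of_not_gt fun h =>
    absurd (le_trans hu (monotone_cdf μ h.le)) (not_le.mpr hu₀)⟩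

lemma invCDF_le (μ : Measure ℝ) [IsProbabilityMeasure μ] {t x : ℝ} (ht : 0 < t)
    (h : t ≤ cdf μ x) : invCDF μ t ≤ x := by
  refine csInf_le (invCDF_bddBelow μ ht) ?_
  rw [invCDF_set_eq]; exact h

lemma le_invCDF (μ : Measure ℝ) [IsProbabilityMeasure μ] {t x : ℝ} (ht : t < 1)
    (h : cdf μ x < t) : x ≤ invCDF μ t := by
  rw [invCDF, invCDF_set_eq]
  have hne : {u : ℝ | t ≤ cdf μ u}.Nonempty := by
    obtain ⟨u, hu⟩ := ((tendsto_cdf_atTop μ).eventually_const_lt ht).exists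
    exact ⟨u, hu.le⟩
  refine le_csInf hne fun u hu => le_of_not_gt fun hlt => ?_
  exact absurd (le_trans hu (monotone_cdf μ hlt.le)) (not_le.mpr h)

/-- If `μ((-∞,x₋]) ≥ p₋` and `μ((x₊,∞)) > p₊`, then with `p = p₊/(p₋+p₊)` the set of
`t ∈ (0,1)` where `δ⁻_p(t) = G(1-pt) - G((1-p)t) > x₊ - x₋` has Lebesgue measure
at least `p₋ + p₊`. -/
theorem deltaMinus_large (μ : Measure ℝ) [IsProbabilityMeasure μ]
    (xminus xplus pminus pplus : ℝ) (hx : xminus < xplus)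
    (hpm : 0 < pminus) (hpp : 0 < pplus)
    (hm : pminus ≤ (μ (Iic xminus)).toReal) (hp : pplus < (μ (Ioi xplus)).toReal) :
    ENNReal.ofReal (pminus + pplus) ≤
      volume {t ∈ Ioo (0:ℝ) 1 |
        xplus - xminus <
          invCDF μ (1 - (pplus / (pminus + pplus)) * t) -
            invCDF μ ((1 - pplus / (pminus + pplus)) * t)} := by
  set s := pminus + pplus with hs_def
  have hs : 0 < s := by positivity
  -- s < 1
  have hdisj : Disjoint (Iic xminus) (Ioi xplus) := Iic_disjoint_Ioi hx.le
  have hfin₁ : μ (Iic xminus) ≠ ⊤ := measure_ne_top μ _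
  have hfin₂ : μ (Ioi xplus) ≠ ⊤ := measure_ne_top μ _
  have hsum : (μ (Iic xminus)).toReal + (μ (Ioi xplus)).toReal ≤ 1 := by
    have h1 : μ (Iic xminus) + μ (Ioi xplus) ≤ 1 := by
      rw [← measure_union hdisj measurableSet_Ioi]
      calc μ (Iic xminus ∪ Ioi xplus) ≤ μ univ := measure_mono (subset_univ _)
        _ = 1 := measure_univ
    have := ENNReal.toReal_mono (by norm_num) h1
    rwa [ENNReal.toReal_add hfin₁ hfin₂, ENNReal.toReal_one] at this
  have hs1 : s < 1 := by
    have : pminus + pplus < (μ (Iic xminus)).toReal + (μ (Ioi xplus)).toReal := by linarith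
    linarith
  -- cdf at xplus
  have hcdf_xplus : cdf μ xplus = 1 - (μ (Ioi xplus)).toReal := by
    rw [cdf_eq_real, measureReal_def]
    have : μ (Iic xplus) + μ (Ioi xplus) = 1 := by
      rw [← measure_union (Iic_disjoint_Ioi le_rfl) measurableSet_Ioi, Iic_union_Ioi,
        measure_univ]
    have h2 : (μ (Iic xplus)).toReal + (μ (Ioi xplus)).toReal = 1 := by
      have := congrArg ENNReal.toReal this
      rwa [ENNReal.toReal_add (measure_ne_top μ _) hfin₂, ENNReal.toReal_one] at this
    linarith
  -- the subset
  have hsub : Ioo (0:ℝ) s ⊆ {t ∈ Ioo (0:ℝ) 1 |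
      xplus - xminus <
        invCDF μ (1 - (pplus / (pminus + pplus)) * t) -
          invCDF μ ((1 - pplus / (pminus + pplus)) * t)} := by
    intro t ht
    obtain ⟨ht0, hts⟩ := ht
    have ht1 : t < 1 := hts.trans hs1
    refine ⟨⟨ht0, ht1⟩, ?_⟩
    set a := (1 - pplus / (pminus + pplus)) * t with ha_def
    set b := 1 - (pplus / (pminus + pplus)) * t with hb_def
    have h1p : 1 - pplus / (pminus + pplus) = pminus / s := by
      field_simp; ring
    have ha_lt : a < pminus := by
      rw [ha_def, h1p]
      calc pminus / s * t < pminus / s * s := by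
            apply mul_lt_mul_of_pos_left hts (by positivity)
        _ = pminus := by field_simp
    have ha_pos : 0 < a := by
      rw [ha_def, h1p]; positivity
    have hA : invCDF μ a ≤ xminus := by
      apply invCDF_le μ ha_pos
      rw [cdf_eq_real, measureReal_def]
      linarith
    have hpt_lt : pplus / (pminus + pplus) * t < pplus := by
      calc pplus / s * t < pplus / s * s := by
            apply mul_lt_mul_of_pos_left hts (by positivity)
        _ = pplus := by field_simp
    have hb_lt1 : b < 1 := by
      have : 0 < pplus / (pminus + pplus) * t := by positivity
      rw [hb_def]; linarith
    have hcdf_lt : cdf μ xplus < b := by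
      rw [hcdf_xplus, hb_def]; linarith
    -- right continuity: find x' > xplus with cdf μ x' < b
    have hrc := (cdf μ).right_continuous xplus
    have hev : ∀ᶠ u in 𝓝[≥] xplus, cdf μ u < b :=
      hrc (IsOpen.mem_nhds isOpen_Iio hcdf_lt)
    have hev' : ∀ᶠ u in 𝓝[>] xplus, cdf μ u < b :=
      hev.filter_mono (nhdsWithin_mono _ Ioi_subset_Ici_self)
    obtain ⟨x', hx'b, hx'gt⟩ := (hev'.and self_mem_nhdsWithin).exists
    have hB : x' ≤ invCDF μ b := le_invCDF μ hb_lt1 hx'b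
    have : xplus < invCDF μ b := lt_of_lt_of_le hx'gt hB
    linarith
  calc ENNReal.ofReal (pminus + pplus) = volume (Ioo (0:ℝ) s) := by
        rw [Real.volume_Ioo, sub_zero]
    _ ≤ _ := measure_mono hsub
end

section
/- Let μ be a probability measure on ℝ with distribution function F and inverse distribution function G, and let p ∈ (0,1). Let F₁⁺ and F₂⁺ denote the distribution functions of the pushforwards of Lebesgue measure on (0,1) under the maps t ↦ G((1−p)t) and t ↦ G(1−p+pt), respectively; i.e. F₁⁺(x) = Leb{ t ∈ (0,1) : G((1−p)t) ≤ x } and F₂⁺(x) = Leb{ t ∈ (0,1) : G(1−p+pt) ≤ x }. Then for every x ∈ ℝ: F₁⁺(x) = (1/(1−p))·min{ F(x), 1−p } and F₂⁺(x) = (1/p)·max{ F(x) + p − 1, 0 }. -/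
open MeasureTheory Set ProbabilityTheory Filter

lemma invCDF_le_iff_s11 (μ : Measure ℝ) [IsProbabilityMeasure μ] {t : ℝ}
    (ht0 : 0 < t) (ht1 : t < 1) (x : ℝ) :
    invCDF μ t ≤ x ↔ t ≤ (μ (Iic x)).toReal := by
  have hset : {u : ℝ | t ≤ (μ (Iic u)).toReal} = {u : ℝ | t ≤ cdf μ u} := by
    ext u; simp [cdf_eq_real, measureReal_def]
  have hne : {u : ℝ | t ≤ cdf μ u}.Nonempty := by
    have := (tendsto_cdf_atTop μ).eventually_const_le ht1
    rcases this.exists with ⟨u, hu⟩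
    exact ⟨u, hu⟩
  have hbdd : BddBelow {u : ℝ | t ≤ cdf μ u} := by
    have : ∀ᶠ u in atBot, cdf μ u < t := (tendsto_cdf_atBot μ).eventually_lt_const ht0
    rcases this.exists with ⟨u₀, hu₀⟩
    refine ⟨u₀, fun u hu => ?_⟩
    by_contra h
    push_neg at h
    exact absurd (le_trans hu ((cdf μ).mono h.le)) (not_le.2 hu₀)
  rw [invCDF, hset, show (μ (Iic x)).toReal = cdf μ x by simp [cdf_eq_real, measureReal_def]]
  constructor
  · intro h
    have key : ∀ y, x < y → t ≤ cdf μ y := by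
      intro y hy
      have : sInf {u : ℝ | t ≤ cdf μ u} < y := lt_of_le_of_lt h hy
      obtain ⟨u, hu, huy⟩ := exists_lt_of_csInf_lt hne this
      exact le_trans hu ((cdf μ).mono huy.le)
    have hrc : Tendsto (cdf μ) (nhdsWithin x (Ioi x)) (nhds (cdf μ x)) :=
      ((cdf μ).right_continuous x).mono_left (nhdsWithin_mono x Ioi_subset_Ici_self)
    exact ge_of_tendsto hrc (eventually_nhdsWithin_of_forall fun y hy => key y hy)
  · intro h
    exact csInf_le hbdd h

lemma vol_aux (c : ℝ) :
    (volume (Ioo (0:ℝ) 1 ∩ Iic c)).toReal = min (max c 0) 1 := by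
  rcases le_or_gt 1 c with hc | hc
  · have : Ioo (0:ℝ) 1 ∩ Iic c = Ioo 0 1 := by
      apply inter_eq_left.2
      intro t ht
      exact le_trans ht.2.le hc
    rw [this, Real.volume_Ioo]
    rw [min_eq_right (le_max_of_le_left hc)]
    simp
  · have : Ioo (0:ℝ) 1 ∩ Iic c = Ioc 0 c := by
      ext t
      simp only [mem_inter_iff, mem_Ioo, mem_Iic, mem_Ioc]
      constructor
      · rintro ⟨⟨h1, _⟩, h3⟩; exact ⟨h1, h3⟩
      · rintro ⟨h1, h2⟩; exact ⟨⟨h1, lt_of_le_of_lt h2 hc⟩, h2⟩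
    rw [this, Real.volume_Ioc, sub_zero]
    rcases le_or_gt c 0 with h0 | h0
    · rw [ENNReal.ofReal_eq_zero.2 h0]
      simp [max_eq_right h0]
    · rw [ENNReal.toReal_ofReal h0.le, min_eq_left, max_eq_left h0.le]
      exact le_trans (max_le hc.le zero_le_one) le_rfl

/-- The distribution functions of the marginals of the "chasing Pac-Men" decomposition:
`F₁⁺(x) = Leb{t ∈ (0,1) : G((1-p)t) ≤ x} = (1/(1-p)) min(F(x), 1-p)` and
`F₂⁺(x) = Leb{t ∈ (0,1) : G(1-p+pt) ≤ x} = (1/p) max(F(x)+p-1, 0)`. -/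
theorem pacman_marginal_cdfs (μ : Measure ℝ) [IsProbabilityMeasure μ]
    (p : ℝ) (hp : p ∈ Ioo (0:ℝ) 1) :
    ∀ x : ℝ,
      (volume {t ∈ Ioo (0:ℝ) 1 | invCDF μ ((1 - p) * t) ≤ x}).toReal =
        (1 / (1 - p)) * min ((μ (Iic x)).toReal) (1 - p) ∧
      (volume {t ∈ Ioo (0:ℝ) 1 | invCDF μ (1 - p + p * t) ≤ x}).toReal =
        (1 / p) * max ((μ (Iic x)).toReal + p - 1) 0 := by
  obtain ⟨hp0, hp1⟩ := hp
  have hq0 : (0:ℝ) < 1 - p := by linarith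
  intro x
  set F : ℝ := (μ (Iic x)).toReal with hF
  have hF0 : 0 ≤ F := ENNReal.toReal_nonneg
  have hF1 : F ≤ 1 := by
    rw [hF]
    calc (μ (Iic x)).toReal ≤ (μ univ).toReal := by
          apply ENNReal.toReal_mono (measure_ne_top μ univ) (measure_mono (subset_univ _))
      _ = 1 := by simp
  constructor
  · have hset : {t ∈ Ioo (0:ℝ) 1 | invCDF μ ((1 - p) * t) ≤ x}
        = Ioo (0:ℝ) 1 ∩ Iic (F / (1 - p)) := by
      ext t
      simp only [mem_setOf_eq, mem_inter_iff, mem_Iic, mem_Ioo]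
      constructor
      · rintro ⟨⟨ht0, ht1⟩, h⟩
        refine ⟨⟨ht0, ht1⟩, ?_⟩
        rw [le_div_iff₀ hq0, mul_comm]
        exact (invCDF_le_iff_s11 μ (by positivity) (by nlinarith) x).1 h
      · rintro ⟨⟨ht0, ht1⟩, h⟩
        refine ⟨⟨ht0, ht1⟩, ?_⟩
        refine (invCDF_le_iff_s11 μ (by positivity) (by nlinarith) x).2 ?_
        rw [le_div_iff₀ hq0, mul_comm] at h
        exact h
    rw [hset, vol_aux]
    rw [max_eq_left (by positivity)]
    rcases le_total F (1 - p) with h | h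
    · rw [min_eq_left ((div_le_one hq0).2 h), min_eq_left h]
      field_simp
    · rw [min_eq_right ((one_le_div hq0).2 h), min_eq_right h]
      field_simp
  · have hset : {t ∈ Ioo (0:ℝ) 1 | invCDF μ (1 - p + p * t) ≤ x}
        = Ioo (0:ℝ) 1 ∩ Iic ((F + p - 1) / p) := by
      ext t
      simp only [mem_setOf_eq, mem_inter_iff, mem_Iic, mem_Ioo]
      constructor
      · rintro ⟨⟨ht0, ht1⟩, h⟩
        refine ⟨⟨ht0, ht1⟩, ?_⟩
        rw [le_div_iff₀ hp0, mul_comm]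
        have := (invCDF_le_iff_s11 μ (by nlinarith) (by nlinarith) x).1 h
        linarith
      · rintro ⟨⟨ht0, ht1⟩, h⟩
        refine ⟨⟨ht0, ht1⟩, ?_⟩
        refine (invCDF_le_iff_s11 μ (by nlinarith) (by nlinarith) x).2 ?_
        rw [le_div_iff₀ hp0, mul_comm] at h
        linarith
    rw [hset, vol_aux]
    have hc1 : (F + p - 1) / p ≤ 1 := by
      rw [div_le_one hp0]; linarith
    rw [min_eq_left (max_le hc1 zero_le_one)]
    rcases le_total (F + p - 1) 0 with h | h
    · rw [max_eq_right (div_nonpos_of_nonpos_of_nonneg h hp0.le), max_eq_right h, mul_zero]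
    · rw [max_eq_left (div_nonneg h hp0.le), max_eq_left h]
      field_simp
end

section
/- Let μ be a probability measure on ℝ with inverse distribution function G, and let p ∈ (0,1). Then for every (1−p,p) Bernoulli decomposition ρ of μ, the essential infimum under ρ of the difference of coordinates, β₊(p,ρ) := sup{ b ∈ ℝ : ρ({ (y₁,y₂) ∈ ℝ² : y₂ − y₁ < b }) = 0 }, satisfies β₊(p,ρ) ≤ β⁺(p,μ) := inf_{t∈(0,1)} ( G(1−p+pt) − G((1−p)t) ). In other words, the 'chasing Pac-Men' decomposition maximizes the essential infimum of Y₂ − Y₁ among all (1−p,p) Bernoulli decompositions of μ. -/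
open MeasureTheory Set

/-- The essential infimum of `Y₂ - Y₁` under a coupling `ρ` on `ℝ²`:
`β₊(p,ρ) = sup {b : ρ(Y₂ - Y₁ < b) = 0}`. -/
noncomputable def essInfDiff (ρ : Measure (ℝ × ℝ)) : ℝ :=
  sSup {b : ℝ | ρ {q : ℝ × ℝ | q.2 - q.1 < b} = 0}

open ProbabilityTheory Filter in
lemma invCDF_aux (μ : Measure ℝ) [IsProbabilityMeasure μ] {s : ℝ}
    (hs0 : 0 < s) (hs1 : s < 1) :
    ({u : ℝ | s ≤ (μ (Iic u)).toReal}).Nonempty ∧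
      BddBelow {u : ℝ | s ≤ (μ (Iic u)).toReal} := by
  constructor
  · have h := tendsto_cdf_atTop (μ := μ)
    have : ∀ᶠ u in atTop, s ≤ cdf μ u :=
      h.eventually_const_le hs1
    obtain ⟨u, hu⟩ := this.exists
    exact ⟨u, by simpa [cdf_eq_real, measureReal_def] using hu⟩
  · have h := tendsto_cdf_atBot (μ := μ)
    have : ∀ᶠ u in atBot, cdf μ u < s :=
      h.eventually_lt_const hs0
    obtain ⟨L, hL⟩ := eventually_atBot.mp this
    refine ⟨L, fun u hu => ?_⟩
    by_contra hc
    push_neg at hc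
    have := hL u hc.le
    rw [cdf_eq_real, measureReal_def] at this
    exact absurd hu (not_le.mpr this)

/-- Among all `(1-p, p)` Bernoulli decompositions `ρ` of `μ`, the essential infimum of
`Y₂ - Y₁` is at most `β⁺(p,μ)`; i.e., the chasing Pac-Men decomposition maximizes it. -/
theorem essInfDiff_le_betaPlus (μ : Measure ℝ) [IsProbabilityMeasure μ]
    (p : ℝ) (hp : p ∈ Ioo (0:ℝ) 1)
    (ρ : Measure (ℝ × ℝ)) [IsProbabilityMeasure ρ]
    (hmarg : ENNReal.ofReal (1 - p) • ρ.map Prod.fst +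
        ENNReal.ofReal p • ρ.map Prod.snd = μ) :
    essInfDiff ρ ≤ betaPlus μ p := by
  obtain ⟨hp0, hp1⟩ := hp
  have hp1' : (0:ℝ) < 1 - p := by linarith
  haveI : Nonempty (Ioo (0:ℝ) 1) := ⟨⟨1/2, by norm_num⟩⟩
  haveI h1 : IsProbabilityMeasure (ρ.map Prod.fst) :=
    Measure.isProbabilityMeasure_map measurable_fst.aemeasurable
  haveI h2 : IsProbabilityMeasure (ρ.map Prod.snd) :=
    Measure.isProbabilityMeasure_map measurable_snd.aemeasurable
  set f1 : ℝ → ℝ := fun u => ((ρ.map Prod.fst) (Iic u)).toReal with hf1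
  set f2 : ℝ → ℝ := fun u => ((ρ.map Prod.snd) (Iic u)).toReal with hf2
  have hF : ∀ u, (μ (Iic u)).toReal = (1 - p) * f1 u + p * f2 u := by
    intro u
    have := congrArg (fun m : Measure ℝ => m (Iic u)) hmarg
    simp only [Measure.add_apply, Measure.smul_apply, smul_eq_mul] at this
    rw [← this, ENNReal.toReal_add, ENNReal.toReal_mul, ENNReal.toReal_mul,
      ENNReal.toReal_ofReal hp1'.le, ENNReal.toReal_ofReal hp0.le]
    · exact ENNReal.mul_ne_top ENNReal.ofReal_ne_top (measure_ne_top _ _)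
    · exact ENNReal.mul_ne_top ENNReal.ofReal_ne_top (measure_ne_top _ _)
  -- bounds on f1
  have hf1le : ∀ u, f1 u ≤ 1 := fun u => by
    have h := ENNReal.toReal_mono (measure_ne_top (ρ.map Prod.fst) univ)
      (measure_mono (subset_univ (Iic u)))
    simpa using h
  have hf1nonneg : ∀ u, 0 ≤ f1 u := fun u => ENNReal.toReal_nonneg
  have hf2nonneg : ∀ u, 0 ≤ f2 u := fun u => ENNReal.toReal_nonneg
  -- key: membership sets for invCDF
  -- main step: every b in the set is ≤ each difference
  have main : ∀ b ∈ {b : ℝ | ρ {q : ℝ × ℝ | q.2 - q.1 < b} = 0},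
      ∀ t : Ioo (0:ℝ) 1, b ≤ invCDF μ (1 - p + p * t.1) - invCDF μ ((1 - p) * t.1) := by
    intro b hb t
    obtain ⟨t, ht0, ht1⟩ := t
    have hs1pos : (0:ℝ) < (1 - p) * t := mul_pos hp1' ht0
    have hs1lt1 : (1 - p) * t < 1 := by nlinarith
    have hs2pos : (0:ℝ) < 1 - p + p * t := by nlinarith
    have hs2lt1 : 1 - p + p * t < 1 := by nlinarith
    obtain ⟨hne1, hbdd1⟩ := invCDF_aux μ hs1pos hs1lt1
    obtain ⟨hne2, hbdd2⟩ := invCDF_aux μ hs2pos hs2lt1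
    -- f2 u ≤ f1 (u - b)
    have hstep : ∀ u, f2 u ≤ f1 (u - b) := by
      intro u
      have hsub : {q : ℝ × ℝ | q.2 ≤ u} ⊆
          {q : ℝ × ℝ | q.1 ≤ u - b} ∪ {q : ℝ × ℝ | q.2 - q.1 < b} := by
        intro q hq
        by_cases h : q.2 - q.1 < b
        · exact Or.inr h
        · push_neg at h
          exact Or.inl (by simp only [mem_setOf_eq] at hq ⊢; linarith)
      have hmeas : (ρ.map Prod.snd) (Iic u) ≤ (ρ.map Prod.fst) (Iic (u - b)) := by
        rw [Measure.map_apply measurable_snd measurableSet_Iic,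
          Measure.map_apply measurable_fst measurableSet_Iic]
        calc ρ (Prod.snd ⁻¹' Iic u) ≤ ρ ({q : ℝ × ℝ | q.1 ≤ u - b} ∪
              {q : ℝ × ℝ | q.2 - q.1 < b}) := measure_mono hsub
          _ ≤ ρ {q : ℝ × ℝ | q.1 ≤ u - b} + ρ {q : ℝ × ℝ | q.2 - q.1 < b} :=
              measure_union_le _ _
          _ = ρ (Prod.fst ⁻¹' Iic (u - b)) := by rw [hb, add_zero]; rfl
      exact ENNReal.toReal_mono (measure_ne_top _ _) hmeas
    -- subset relation: u ∈ A s₂ → u - b ∈ A s₁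
    have hshift : ∀ u ∈ {u : ℝ | 1 - p + p * t ≤ (μ (Iic u)).toReal},
        (u - b) ∈ {u : ℝ | (1 - p) * t ≤ (μ (Iic u)).toReal} := by
      intro u hu
      simp only [mem_setOf_eq, hF] at hu ⊢
      have hf2 : t ≤ f2 u := by nlinarith [hf1le u]
      have : t ≤ f1 (u - b) := hf2.trans (hstep u)
      nlinarith [hf2nonneg (u - b)]
    -- conclude
    have key : invCDF μ ((1 - p) * t) + b ≤ invCDF μ (1 - p + p * t) := by
      simp only [invCDF]
      refine le_csInf hne2 (fun u hu => ?_)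
      have h := csInf_le hbdd1 (hshift u hu)
      linarith
    linarith
  -- nonnegativity of each difference
  have hnonneg : ∀ t : Ioo (0:ℝ) 1,
      0 ≤ invCDF μ (1 - p + p * t.1) - invCDF μ ((1 - p) * t.1) := by
    intro ⟨t, ht0, ht1⟩
    have hs1pos : (0:ℝ) < (1 - p) * t := mul_pos hp1' ht0
    have hs1lt1 : (1 - p) * t < 1 := by nlinarith
    have hs2pos : (0:ℝ) < 1 - p + p * t := by nlinarith
    have hs2lt1 : 1 - p + p * t < 1 := by nlinarith
    obtain ⟨hne1, hbdd1⟩ := invCDF_aux μ hs1pos hs1lt1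
    obtain ⟨hne2, hbdd2⟩ := invCDF_aux μ hs2pos hs2lt1
    have hsub : {u : ℝ | 1 - p + p * t ≤ (μ (Iic u)).toReal} ⊆
        {u : ℝ | (1 - p) * t ≤ (μ (Iic u)).toReal} := by
      intro u hu
      simp only [mem_setOf_eq] at hu ⊢
      nlinarith
    have := csInf_le_csInf hbdd1 hne2 hsub
    simp only [invCDF]
    linarith
  rw [essInfDiff, betaPlus]
  exact Real.sSup_le (fun b hb => le_ciInf (main b hb)) (le_ciInf hnonneg)
end

section
/- Let μ be a non-degenerate probability measure on ℝ with compact support, let D = sSup(supp μ) − sInf(supp μ) be the diameter of its support, let p ∈ (0,1), and let G be the inverse distribution function of μ. Then: (a) for every (1−p,p) Bernoulli decomposition ρ of μ, the essential supremum of y₂ − y₁ under ρ is at most D, i.e. ρ({ (y₁,y₂) : y₂ − y₁ > D }) = 0; and (b) for the colliding Pac-Men decomposition, sup_{t∈(0,1)} δ⁻_p(t) = D, where δ⁻_p(t) = G(1−pt) − G((1−p)t). -/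
open MeasureTheory Set

/-- The topological support of a measure on `ℝ`: points all of whose neighbourhoods
have positive measure. -/
def msupport (μ : Measure ℝ) : Set ℝ := {x : ℝ | ∀ U ∈ nhds x, μ U ≠ 0}

lemma msupport_compl_null (μ : Measure ℝ) : μ (msupport μ)ᶜ = 0 := by
  classical
  by_cases hne : ((msupport μ)ᶜ).Nonempty
  · have hch : ∀ x : ↥((msupport μ)ᶜ), ∃ V : Set ℝ, IsOpen V ∧ (x : ℝ) ∈ V ∧ μ V = 0 := by
      rintro ⟨x, hx⟩
      simp only [msupport, mem_compl_iff, mem_setOf_eq, not_forall] at hx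
      obtain ⟨U, hU, hU0⟩ := hx
      refine ⟨interior U, isOpen_interior, mem_interior_iff_mem_nhds.2 hU, ?_⟩
      exact measure_mono_null interior_subset (not_not.1 hU0)
    choose V hVo hVx hV0 using hch
    obtain ⟨T, hTc, hTU⟩ := TopologicalSpace.isOpen_iUnion_countable V hVo
    have hsub : (msupport μ)ᶜ ⊆ ⋃ x ∈ T, V x := by
      rw [hTU]
      intro y hy
      exact mem_iUnion.2 ⟨⟨y, hy⟩, hVx ⟨y, hy⟩⟩
    refine measure_mono_null hsub ?_
    exact (measure_biUnion_null_iff hTc).2 fun x _ => hV0 x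
  · rw [not_nonempty_iff_eq_empty] at hne
    simp [hne]

section main

variable (μ : Measure ℝ) [IsProbabilityMeasure μ]

lemma msupport_nonempty : (msupport μ).Nonempty := by
  by_contra h
  rw [not_nonempty_iff_eq_empty] at h
  have := msupport_compl_null μ
  rw [h, compl_empty] at this
  simp [measure_univ] at this

theorem colliding_pacmen_maximizes_essSup' (hcompact : IsCompact (msupport μ))
    (p : ℝ) (hp : p ∈ Ioo (0:ℝ) 1) :
    (∀ ρ : Measure (ℝ × ℝ), IsProbabilityMeasure ρ →
      (ENNReal.ofReal (1 - p) • ρ.map Prod.fst +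
          ENNReal.ofReal p • ρ.map Prod.snd = μ) →
      ρ {q : ℝ × ℝ | sSup (msupport μ) - sInf (msupport μ) < q.2 - q.1} = 0) ∧
    (⨆ t : Ioo (0:ℝ) 1, (invCDF μ (1 - p * t.1) - invCDF μ ((1 - p) * t.1)))
      = sSup (msupport μ) - sInf (msupport μ) := by
  obtain ⟨hp0, hp1⟩ := hp
  set S := msupport μ with hS
  set a := sInf S with ha
  set b := sSup S with hb
  have hSne : S.Nonempty := msupport_nonempty μ
  have hanS : a ∈ S := hcompact.sInf_mem hSne
  have hbnS : b ∈ S := hcompact.sSup_mem hSne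
  have hab : a ≤ b := csInf_le_csSup hSne hcompact.bddBelow hcompact.bddAbove
  have hSsub : S ⊆ Icc a b := fun x hx =>
    ⟨csInf_le hcompact.bddBelow hx, le_csSup hcompact.bddAbove hx⟩
  have hnull : μ Sᶜ = 0 := msupport_compl_null μ
  have hIio : μ (Iio a) = 0 := by
    refine measure_mono_null (fun x hx => ?_) hnull
    exact fun hxS => absurd (hSsub hxS).1 (not_le.2 hx)
  have hIoi : μ (Ioi b) = 0 := by
    refine measure_mono_null (fun x hx => ?_) hnull
    exact fun hxS => absurd (hSsub hxS).2 (not_le.2 hx)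
  -- F facts
  have hFle : ∀ u v : ℝ, u ≤ v → (μ (Iic u)).toReal ≤ (μ (Iic v)).toReal := by
    intro u v huv
    exact ENNReal.toReal_mono (measure_ne_top μ _) (measure_mono (Iic_subset_Iic.2 huv))
  have hFzero : ∀ u : ℝ, u < a → (μ (Iic u)).toReal = 0 := by
    intro u hu
    have : μ (Iic u) = 0 := measure_mono_null (fun x hx => lt_of_le_of_lt hx hu) hIio
    simp [this]
  have hFb : ∀ u : ℝ, b ≤ u → (μ (Iic u)).toReal = 1 := by
    intro u hu
    have h1 : μ (Iic u) = 1 := by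
      refine le_antisymm prob_le_one ?_
      have : (univ : Set ℝ) ⊆ Iic u ∪ Ioi b := by
        intro x _
        rcases le_or_gt x u with h | h
        · exact Or.inl h
        · exact Or.inr (lt_of_le_of_lt hu h)
      calc (1:ENNReal) = μ univ := (measure_univ).symm
        _ ≤ μ (Iic u ∪ Ioi b) := measure_mono this
        _ ≤ μ (Iic u) + μ (Ioi b) := measure_union_le _ _
        _ = μ (Iic u) := by rw [hIoi, add_zero]
    simp [h1]
  -- invCDF bounds for t ∈ (0,1]
  have hTb : ∀ t : ℝ, t ≤ 1 → b ∈ {u : ℝ | t ≤ (μ (Iic u)).toReal} := by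
    intro t ht
    simpa [hFb b le_rfl] using ht
  have hTbdd : ∀ t : ℝ, 0 < t → {u : ℝ | t ≤ (μ (Iic u)).toReal} ⊆ Ici a := by
    intro t ht u hu
    by_contra h
    rw [mem_Ici, not_le] at h
    rw [mem_setOf_eq, hFzero u h] at hu
    exact absurd hu (not_le.2 ht)
  have hG_ge_a : ∀ t : ℝ, 0 < t → t ≤ 1 → a ≤ invCDF μ t := fun t ht ht1 =>
    le_csInf ⟨b, hTb t ht1⟩ (fun u hu => hTbdd t ht hu)
  have hG_le : ∀ t c : ℝ, 0 < t → t ≤ (μ (Iic c)).toReal → invCDF μ t ≤ c := fun t c ht hc =>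
    csInf_le ⟨a, fun u hu => hTbdd t ht hu⟩ hc
  have hG_le_b : ∀ t : ℝ, 0 < t → t ≤ 1 → invCDF μ t ≤ b := by
    intro t ht ht1
    exact hG_le t b ht (by simpa [hFb b le_rfl] using ht1)
  have hG_ge : ∀ t c : ℝ, t ≤ 1 → (μ (Iic c)).toReal < t → c ≤ invCDF μ t := by
    intro t c ht1 hc
    refine le_csInf ⟨b, hTb t ht1⟩ (fun u hu => ?_)
    by_contra h
    rw [not_le] at h
    exact absurd (le_trans hu (hFle u c h.le)) (not_le.2 hc)
  constructor
  · -- part (a)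
    intro ρ hρ hdec
    have hA : {q : ℝ × ℝ | b - a < q.2 - q.1} ⊆
        (Prod.fst ⁻¹' Iio a) ∪ (Prod.snd ⁻¹' Ioi b) := by
      intro q hq
      rw [mem_setOf_eq] at hq
      by_contra h
      simp only [mem_union, mem_preimage, mem_Iio, mem_Ioi, not_or, not_lt] at h
      obtain ⟨h1, h2⟩ := h
      linarith
    refine measure_mono_null hA (le_antisymm ?_ (zero_le))
    have h1 : ρ.map Prod.fst (Iio a) = 0 := by
      have := congrArg (fun m : Measure ℝ => m (Iio a)) hdec
      simp only [Measure.add_apply, Measure.smul_apply, smul_eq_mul, hIio] at this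
      have h1p : ENNReal.ofReal (1 - p) ≠ 0 := by
        simp [ENNReal.ofReal_eq_zero, not_le, sub_pos, hp1]
      have := add_eq_zero.1 this
      exact (mul_eq_zero.1 this.1).resolve_left h1p
    have h2 : ρ.map Prod.snd (Ioi b) = 0 := by
      have := congrArg (fun m : Measure ℝ => m (Ioi b)) hdec
      simp only [Measure.add_apply, Measure.smul_apply, smul_eq_mul, hIoi] at this
      have hpne : ENNReal.ofReal p ≠ 0 := by
        simp [ENNReal.ofReal_eq_zero, not_le, hp0]
      have := add_eq_zero.1 this
      exact (mul_eq_zero.1 this.2).resolve_left hpne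
    rw [Measure.map_apply measurable_fst measurableSet_Iio] at h1
    rw [Measure.map_apply measurable_snd measurableSet_Ioi] at h2
    calc ρ ((Prod.fst ⁻¹' Iio a) ∪ (Prod.snd ⁻¹' Ioi b))
        ≤ ρ (Prod.fst ⁻¹' Iio a) + ρ (Prod.snd ⁻¹' Ioi b) := measure_union_le _ _
      _ = 0 := by rw [h1, h2, add_zero]
  · -- part (b)
    have harg : ∀ t : Ioo (0:ℝ) 1, (0 < 1 - p * t.1 ∧ 1 - p * t.1 ≤ 1) ∧
        (0 < (1 - p) * t.1 ∧ (1 - p) * t.1 ≤ 1) := by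
      rintro ⟨t, ht0, ht1⟩
      refine ⟨⟨?_, ?_⟩, ?_, ?_⟩
      · nlinarith
      · nlinarith
      · nlinarith
      · nlinarith
    have hub : ∀ t : Ioo (0:ℝ) 1,
        invCDF μ (1 - p * t.1) - invCDF μ ((1 - p) * t.1) ≤ b - a := by
      intro t
      obtain ⟨⟨h1, h2⟩, h3, h4⟩ := harg t
      exact sub_le_sub (hG_le_b _ h1 h2) (hG_ge_a _ h3 h4)
    have hbdd : BddAbove (range fun t : Ioo (0:ℝ) 1 =>
        invCDF μ (1 - p * t.1) - invCDF μ ((1 - p) * t.1)) := by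
      refine ⟨b - a, ?_⟩
      rintro x ⟨t, rfl⟩
      exact hub t
    have hne : Nonempty (Ioo (0:ℝ) 1) := ⟨⟨1/2, by norm_num, by norm_num⟩⟩
    refine le_antisymm (ciSup_le hub) ?_
    refine le_of_forall_pos_le_add (fun ε hε => ?_)
    -- find t achieving b - a - ε
    set ε' := ε / 4 with hε'
    have hε'0 : 0 < ε' := by positivity
    have hc1 : 0 < (μ (Iic (a + ε'))).toReal := by
      have hnb : Ioo (a - ε') (a + ε') ∈ nhds a :=
        Ioo_mem_nhds (by linarith) (by linarith)
      have := hanS _ hnb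
      have hpos : μ (Iic (a + ε')) ≠ 0 := by
        intro h0
        exact this (measure_mono_null (fun x hx => hx.2.le) h0)
      exact ENNReal.toReal_pos hpos (measure_ne_top μ _)
    have hc2 : (μ (Iic (b - ε'))).toReal < 1 := by
      have hnb : Ioo (b - ε') (b + 1) ∈ nhds b :=
        Ioo_mem_nhds (by linarith) (by linarith)
      have hμIoo : μ (Ioo (b - ε') (b + 1)) ≠ 0 := hbnS _ hnb
      have hlt : μ (Iic (b - ε')) < 1 := by
        have hdisj : Disjoint (Iic (b - ε')) (Ioo (b - ε') (b + 1)) := by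
          rw [disjoint_left]
          rintro x hx ⟨h1, _⟩
          exact absurd hx (not_le.2 h1)
        have hun : μ (Iic (b - ε')) + μ (Ioo (b - ε') (b + 1)) ≤ 1 := by
          rw [← measure_union hdisj measurableSet_Ioo]
          exact prob_le_one
        calc μ (Iic (b - ε')) < μ (Iic (b - ε')) + μ (Ioo (b - ε') (b + 1)) :=
              ENNReal.lt_add_right (measure_ne_top μ _) hμIoo
          _ ≤ 1 := hun
      have := ENNReal.toReal_mono (by norm_num) hlt.le
      rcases eq_or_lt_of_le this with h | h
      · exfalso
        have : μ (Iic (b - ε')) = 1 := by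
          have h1 : (μ (Iic (b - ε'))).toReal = 1 := by simpa using h
          have := ENNReal.toReal_eq_one_iff _ |>.1 h1
          exact this
        exact absurd this hlt.ne
      · simpa using h
    set c1 := (μ (Iic (a + ε'))).toReal with hc1def
    set c2 := 1 - (μ (Iic (b - ε'))).toReal with hc2def
    have hc20 : 0 < c2 := by rw [hc2def]; linarith
    set t := min (min (c1 / (1 - p)) (c2 / (2 * p))) (1/2) with htdef
    have ht0 : 0 < t :=
      lt_min (lt_min (div_pos hc1 (by linarith)) (div_pos hc20 (by positivity))) (by norm_num)
    have ht1 : t < 1 := lt_of_le_of_lt (min_le_right _ _) (by norm_num)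
    have htmem : t ∈ Ioo (0:ℝ) 1 := ⟨ht0, ht1⟩
    have h1pt : (1 - p) * t ≤ c1 := by
      have : t ≤ c1 / (1 - p) := le_trans (min_le_left _ _) (min_le_left _ _)
      rw [le_div_iff₀ (by linarith)] at this
      linarith
    have hpt : p * t < c2 := by
      have : t ≤ c2 / (2 * p) := le_trans (min_le_left _ _) (min_le_right _ _)
      have h2 : p * t ≤ c2 / 2 := by
        rw [le_div_iff₀ (by positivity)] at this
        linarith
      linarith
    obtain ⟨⟨hA1, hA2⟩, hB1, hB2⟩ := harg ⟨t, htmem⟩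
    have hGu : invCDF μ ((1 - p) * t) ≤ a + ε' := hG_le _ _ hB1 h1pt
    have hGl : b - ε' ≤ invCDF μ (1 - p * t) := by
      have hF : (μ (Iic (b - ε'))).toReal = 1 - c2 := by rw [hc2def]; ring
      exact hG_ge _ _ hA2 (by rw [hF]; linarith)
    have key : b - a - 2 * ε' ≤ invCDF μ (1 - p * t) - invCDF μ ((1 - p) * t) := by
      linarith
    have hle : invCDF μ (1 - p * t) - invCDF μ ((1 - p) * t) ≤
        ⨆ t : Ioo (0:ℝ) 1, (invCDF μ (1 - p * t.1) - invCDF μ ((1 - p) * t.1)) :=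
      le_ciSup hbdd ⟨t, htmem⟩
    linarith

end main

/-- For a non-degenerate compactly supported `μ` with support diameter
`D = sSup(supp μ) - sInf(supp μ)`:
(a) every `(1-p,p)` Bernoulli decomposition `ρ` of `μ` has `Y₂ - Y₁ ≤ D` almost surely;
(b) the colliding Pac-Men decomposition achieves `sup_{t∈(0,1)} δ⁻_p(t) = D`. -/
theorem colliding_pacmen_maximizes_essSup (μ : Measure ℝ) [IsProbabilityMeasure μ]
    (hnd : ∀ x : ℝ, μ ≠ Measure.dirac x) (hcompact : IsCompact (msupport μ))
    (p : ℝ) (hp : p ∈ Ioo (0:ℝ) 1) :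
    (∀ ρ : Measure (ℝ × ℝ), IsProbabilityMeasure ρ →
      (ENNReal.ofReal (1 - p) • ρ.map Prod.fst +
          ENNReal.ofReal p • ρ.map Prod.snd = μ) →
      ρ {q : ℝ × ℝ | sSup (msupport μ) - sInf (msupport μ) < q.2 - q.1} = 0) ∧
    (⨆ t : Ioo (0:ℝ) 1, (invCDF μ (1 - p * t.1) - invCDF μ ((1 - p) * t.1)))
      = sSup (msupport μ) - sInf (msupport μ) := by
  exact colliding_pacmen_maximizes_essSup' μ hcompact p hp
end

section
/- Let N be a positive integer, p ∈ (0,1), q = 1−p, and let A be an antichain in {0,1}^N with respect to the coordinatewise partial order (η ≼ η′ iff η_i ≤ η′_i for all i). Then the probability of A under the product Bernoulli(p) measure satisfies Σ_{η ∈ A} p^{|η|} q^{N−|η|} ≤ max_{0 ≤ k ≤ N} C(N,k) p^k q^{N−k}, where |η| = Σ_j η_j and C(N,k) is the binomial coefficient. -/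
open Finset

/-- LYM-type bound: the product-Bernoulli(p) probability of an antichain in `{0,1}^N`
is at most the largest binomial probability `max_k C(N,k) p^k q^(N-k)`. -/
theorem antichain_prob_le_max_binomial (N : ℕ) (hN : 0 < N)
    (p : ℝ) (hp : p ∈ Set.Ioo (0:ℝ) 1)
    (A : Finset (Fin N → Bool))
    (hA : IsAntichain (· ≤ ·) (A : Set (Fin N → Bool))) :
    ∑ η ∈ A,
        p ^ (Finset.univ.filter (fun j => η j = true)).card *
          (1 - p) ^ (N - (Finset.univ.filter (fun j => η j = true)).card)
      ≤ (Finset.range (N + 1)).sup'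
          (Finset.nonempty_range_iff.mpr (Nat.succ_ne_zero N))
          (fun k => (N.choose k : ℝ) * p ^ k * (1 - p) ^ (N - k)) := by
  classical
  obtain ⟨hp0, hp1⟩ := hp
  have hq0 : (0:ℝ) < 1 - p := by linarith
  set M := (Finset.range (N + 1)).sup'
      (Finset.nonempty_range_iff.mpr (Nat.succ_ne_zero N))
      (fun k => (N.choose k : ℝ) * p ^ k * (1 - p) ^ (N - k)) with hM
  have hMk : ∀ k ≤ N, (N.choose k : ℝ) * p ^ k * (1 - p) ^ (N - k) ≤ M := by
    intro k hk
    exact Finset.le_sup' (fun k => (N.choose k : ℝ) * p ^ k * (1 - p) ^ (N - k))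
      (Finset.mem_range.mpr (Nat.lt_succ_of_le hk))
  have hM0 : 0 ≤ M := by
    refine le_trans ?_ (hMk 0 (Nat.zero_le N))
    positivity
  set f : (Fin N → Bool) → Finset (Fin N) :=
    fun η => Finset.univ.filter (fun j => η j = true) with hf
  have hmemf : ∀ η j, j ∈ f η ↔ η j = true := by
    intro η j; simp [hf]
  have hfinj : Function.Injective f := by
    intro a b hab
    funext j
    have h1 : a j = true ↔ b j = true := by
      rw [← hmemf a j, ← hmemf b j, hab]
    cases h : a j <;> cases h' : b j <;> simp_all
  have hord : ∀ a b : Fin N → Bool, f a ⊆ f b ↔ a ≤ b := by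
    intro a b
    constructor
    · intro h j
      cases ha : a j
      · exact Bool.false_le _
      · have : b j = true := (hmemf b j).mp (h ((hmemf a j).mpr ha))
        simp [this]
    · intro h j hj
      have ha : a j = true := (hmemf a j).mp hj
      have := h j
      rw [ha] at this
      exact (hmemf b j).mpr (Bool.eq_true_of_true_le this)
  set B : Finset (Finset (Fin N)) := A.image f with hB
  have hBanti : IsAntichain (· ⊆ ·) (B : Set (Finset (Fin N))) := by
    intro s hs t ht hst hsub
    simp only [hB, coe_image, Set.mem_image, mem_coe] at hs ht
    obtain ⟨a, ha, rfl⟩ := hs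
    obtain ⟨b, hb, rfl⟩ := ht
    have hab : a ≠ b := fun h => hst (by rw [h])
    exact hA ha hb hab ((hord a b).mp hsub)
  have hcard : ∀ s ∈ B, s.card ≤ N := by
    intro s _
    simpa using Finset.card_le_card (Finset.subset_univ s)
  -- LYM inequality for B
  have hLYM : ∑ s ∈ B, ((N.choose s.card : ℝ))⁻¹ ≤ 1 := by
    have h := Finset.sum_card_slice_div_choose_le_one (𝕜 := ℝ) hBanti
    simp only [Fintype.card_fin] at h
    refine le_trans (le_of_eq ?_) h
    rw [← Finset.sum_fiberwise_of_maps_to (g := fun s : Finset (Fin N) => s.card)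
      (fun s hs => Finset.mem_range.mpr (Nat.lt_succ_of_le (hcard s hs)))
      (fun s => ((N.choose s.card : ℝ))⁻¹)]
    refine Finset.sum_congr rfl fun r _ => ?_
    have : ∀ s ∈ B.filter (fun s => s.card = r), ((N.choose s.card : ℝ))⁻¹
        = ((N.choose r : ℝ))⁻¹ := by
      intro s hs
      rw [(Finset.mem_filter.mp hs).2]
    have hslice : B.filter (fun s => s.card = r) = B # r := by
      ext s; simp [Finset.mem_slice]
    rw [Finset.sum_congr rfl this, Finset.sum_const, nsmul_eq_mul, hslice,
      div_eq_mul_inv]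
  -- rewrite the main sum over B
  have hsum : ∑ η ∈ A, p ^ (f η).card * (1 - p) ^ (N - (f η).card)
      = ∑ s ∈ B, p ^ s.card * (1 - p) ^ (N - s.card) := by
    rw [hB, Finset.sum_image (fun a _ b _ h => hfinj h)]
  calc ∑ η ∈ A, p ^ (f η).card * (1 - p) ^ (N - (f η).card)
      = ∑ s ∈ B, p ^ s.card * (1 - p) ^ (N - s.card) := hsum
    _ ≤ ∑ s ∈ B, ((N.choose s.card : ℝ))⁻¹ * M := by
        refine Finset.sum_le_sum fun s hs => ?_
        have hc : (0:ℝ) < (N.choose s.card : ℝ) := by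
          exact_mod_cast Nat.choose_pos (hcard s hs)
        have h1 : p ^ s.card * (1 - p) ^ (N - s.card)
            = ((N.choose s.card : ℝ))⁻¹
              * ((N.choose s.card : ℝ) * p ^ s.card * (1 - p) ^ (N - s.card)) := by
          field_simp
        rw [h1]
        exact mul_le_mul_of_nonneg_left (hMk _ (hcard s hs)) (inv_nonneg.mpr hc.le)
    _ = (∑ s ∈ B, ((N.choose s.card : ℝ))⁻¹) * M := by rw [Finset.sum_mul]
    _ ≤ 1 * M := mul_le_mul_of_nonneg_right hLYM hM0
    _ = M := one_mul M
end

section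
/- Let N be a positive integer, p ∈ (0,1), and let η₁,…,η_N be independent identically distributed Bernoulli random variables with P(η_j = 1) = p and P(η_j = 0) = 1−p. Then for any antichain A ⊆ {0,1}^N with respect to the coordinatewise partial order, P( (η₁,…,η_N) ∈ A ) ≤ 2√2 / ( √(p(1−p)) · √N ). Equivalently, Σ_{η ∈ A} p^{|η|} (1−p)^{N−|η|} ≤ 2√2 / ( √(p(1−p)) · √N ). -/
open Finset Real Nat

lemma stirling_ge (n : ℕ) : Real.sqrt π ≤ Stirling.stirlingSeq (n+1) :=
  Stirling.stirlingSeq'_antitone.le_of_tendsto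
    (Stirling.tendsto_stirlingSeq_sqrt_pi.comp (Filter.tendsto_add_atTop_nat 1)) n

lemma stirling_le (n : ℕ) : Stirling.stirlingSeq (n+1) ≤ Real.exp 1 / Real.sqrt 2 := by
  rw [← Stirling.stirlingSeq_one]
  exact Stirling.stirlingSeq'_antitone (Nat.zero_le n)

lemma denom_pos (n : ℕ) : 0 < Real.sqrt (2*(n+1 : ℕ)) * (((n+1 : ℕ) : ℝ)/Real.exp 1)^(n+1) := by
  positivity

lemma fact_lower (n : ℕ) (hn : 0 < n) :
    Real.sqrt π * (Real.sqrt (2*n) * ((n : ℝ)/Real.exp 1)^n) ≤ (n ! : ℝ) := by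
  obtain ⟨m, rfl⟩ : ∃ m, n = m + 1 := ⟨n - 1, (Nat.succ_pred_eq_of_pos hn).symm⟩
  have h := stirling_ge m
  rw [Stirling.stirlingSeq, le_div_iff₀ (denom_pos m)] at h
  push_cast at h ⊢
  linarith

lemma fact_upper (n : ℕ) (hn : 0 < n) :
    (n ! : ℝ) ≤ (Real.exp 1 / Real.sqrt 2) * (Real.sqrt (2*n) * ((n : ℝ)/Real.exp 1)^n) := by
  obtain ⟨m, rfl⟩ : ∃ m, n = m + 1 := ⟨n - 1, (Nat.succ_pred_eq_of_pos hn).symm⟩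
  have h := stirling_le m
  rw [Stirling.stirlingSeq, div_le_iff₀ (denom_pos m)] at h
  push_cast at h ⊢
  linarith

lemma ratio_le_one (N k m : ℕ) (hk : 0 < k) (hm : 0 < m) (hN : k + m = N)
    (p q : ℝ) (hp : 0 < p) (hq : 0 < q) (hpq : p + q = 1) :
    ((N:ℝ)*p/k)^k * ((N:ℝ)*q/m)^m ≤ 1 := by
  have hk' : (0:ℝ) < k := by exact_mod_cast hk
  have hm' : (0:ℝ) < m := by exact_mod_cast hm
  have ha : (0:ℝ) < (N:ℝ)*p/k := by
    have : (0:ℝ) < N := by exact_mod_cast hk.trans_le (hN ▸ Nat.le_add_right k m)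
    positivity
  have hb : (0:ℝ) < (N:ℝ)*q/m := by
    have : (0:ℝ) < N := by exact_mod_cast hk.trans_le (hN ▸ Nat.le_add_right k m)
    positivity
  have h1 : Real.log (((N:ℝ)*p/k)^k * ((N:ℝ)*q/m)^m) ≤ 0 := by
    rw [Real.log_mul (by positivity) (by positivity), Real.log_pow, Real.log_pow]
    have l1 := Real.log_le_sub_one_of_pos ha
    have l2 := Real.log_le_sub_one_of_pos hb
    have hNr : (N:ℝ) = k + m := by exact_mod_cast hN.symm
    have e1 : (k:ℝ) * ((N:ℝ)*p/k - 1) + (m:ℝ) * ((N:ℝ)*q/m - 1) = 0 := by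
      field_simp
      nlinarith [hNr]
    nlinarith [mul_le_mul_of_nonneg_left l1 hk'.le, mul_le_mul_of_nonneg_left l2 hm'.le]
  calc ((N:ℝ)*p/k)^k * ((N:ℝ)*q/m)^m = Real.exp (Real.log (((N:ℝ)*p/k)^k * ((N:ℝ)*q/m)^m)) := by
        rw [Real.exp_log (by positivity)]
    _ ≤ Real.exp 0 := Real.exp_le_exp.2 h1
    _ = 1 := Real.exp_zero

noncomputable def B (N k m : ℕ) (p q : ℝ) : ℝ :=
  Real.exp 1 * Real.sqrt N * Real.sqrt k * Real.sqrt m * p^k * q^m *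
    (k:ℝ)^k * (m:ℝ)^m * (N:ℝ)^N * ((Real.exp 1)⁻¹)^N * ((Real.exp 1)⁻¹)^k * ((Real.exp 1)⁻¹)^m

lemma pmf_le_entropy (N k m : ℕ) (hk : 0 < k) (hm : 0 < m) (hN : k + m = N)
    (p q : ℝ) (hp : 0 < p) (hq : 0 < q) (hpq : p + q = 1) :
    (N.choose k : ℝ) * p^k * q^m ≤ (Real.exp 1/(2*π)) * Real.sqrt ((N:ℝ)/((k:ℝ)*(m:ℝ))) := by
  have hkN : k ≤ N := hN ▸ Nat.le_add_right k m
  have hNpos : 0 < N := by omega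
  have hk' : (0:ℝ) < k := by exact_mod_cast hk
  have hm' : (0:ℝ) < m := by exact_mod_cast hm
  have hN' : (0:ℝ) < N := by exact_mod_cast hNpos
  set e := Real.exp 1 with he
  have hepos : 0 < e := Real.exp_pos 1
  -- abbreviations
  set a := ((k:ℝ)/e)^k with ha
  set b := ((m:ℝ)/e)^m with hb
  set c := ((N:ℝ)/e)^N with hc
  have hapos : 0 < a := by positivity
  have hbpos : 0 < b := by positivity
  have hcpos : 0 < c := by positivity
  have hsπ : (0:ℝ) < Real.sqrt π := Real.sqrt_pos.2 Real.pi_pos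
  -- factorial bounds
  have h1 := fact_lower k hk
  have h2 := fact_lower m hm
  have h3 := fact_upper N hNpos
  have hmNk : N - k = m := by omega
  have hchoose : (N.choose k : ℝ) = (N ! : ℝ) / ((k ! : ℝ) * (m ! : ℝ)) := by
    rw [Nat.cast_choose ℝ hkN, hmNk]
  have hkfpos : (0:ℝ) < (k ! : ℝ) := by exact_mod_cast Nat.factorial_pos k
  have hmfpos : (0:ℝ) < (m ! : ℝ) := by exact_mod_cast Nat.factorial_pos m
  have hchoose_le : (N.choose k : ℝ) ≤
      ((e/Real.sqrt 2) * (Real.sqrt (2*N) * c)) /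
        ((Real.sqrt π * (Real.sqrt (2*k) * a)) * (Real.sqrt π * (Real.sqrt (2*m) * b))) := by
    rw [hchoose]
    apply div_le_div₀ (by positivity) h3 (by positivity)
    exact mul_le_mul h1 h2 (by positivity) hkfpos.le
  -- key identity
  have hsq2 : Real.sqrt 2 * Real.sqrt 2 = 2 := Real.mul_self_sqrt (by norm_num)
  have hid : ((e/Real.sqrt 2) * (Real.sqrt (2*N) * c)) /
        ((Real.sqrt π * (Real.sqrt (2*k) * a)) * (Real.sqrt π * (Real.sqrt (2*m) * b)))
      * (p^k * q^m)
      = (e/(2*π)) * Real.sqrt ((N:ℝ)/((k:ℝ)*(m:ℝ))) * (((N:ℝ)*p/k)^k * ((N:ℝ)*q/m)^m) := by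
    have hu : (((N:ℝ)*p/k)^k * ((N:ℝ)*q/m)^m) * (a * b) = c * (p^k * q^m) := by
      have e1 : ((N:ℝ)*p/k) * ((k:ℝ)/e) = ((N:ℝ)/e) * p := by field_simp
      have e2 : ((N:ℝ)*q/m) * ((m:ℝ)/e) = ((N:ℝ)/e) * q := by field_simp
      calc (((N:ℝ)*p/k)^k * ((N:ℝ)*q/m)^m) * (a * b)
          = (((N:ℝ)*p/k) * ((k:ℝ)/e))^k * (((N:ℝ)*q/m) * ((m:ℝ)/e))^m := by
            rw [mul_pow, mul_pow]; ring
        _ = (((N:ℝ)/e) * p)^k * (((N:ℝ)/e) * q)^m := by rw [e1, e2]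
        _ = (((N:ℝ)/e)^k * ((N:ℝ)/e)^m) * (p^k * q^m) := by rw [mul_pow, mul_pow]; ring
        _ = c * (p^k * q^m) := by rw [hc, ← pow_add, hN]
    have hs1 : Real.sqrt (2*(N:ℝ)) = Real.sqrt 2 * Real.sqrt N := Real.sqrt_mul (by norm_num) _
    have hs2 : Real.sqrt (2*(k:ℝ)) = Real.sqrt 2 * Real.sqrt k := Real.sqrt_mul (by norm_num) _
    have hs3 : Real.sqrt (2*(m:ℝ)) = Real.sqrt 2 * Real.sqrt m := Real.sqrt_mul (by norm_num) _
    have hs4 : Real.sqrt ((N:ℝ)/((k:ℝ)*(m:ℝ))) = Real.sqrt N / (Real.sqrt k * Real.sqrt m) := by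
      rw [Real.sqrt_div hN'.le, Real.sqrt_mul (by positivity)]
    have hπ2 : Real.sqrt π * Real.sqrt π = π := Real.mul_self_sqrt Real.pi_pos.le
    rw [hs1, hs2, hs3, hs4]
    have hsk : (0:ℝ) < Real.sqrt k := Real.sqrt_pos.2 hk'
    have hsm : (0:ℝ) < Real.sqrt m := Real.sqrt_pos.2 hm'
    have hsN : (0:ℝ) < Real.sqrt N := Real.sqrt_pos.2 hN'
    have hs2p : (0:ℝ) < Real.sqrt 2 := Real.sqrt_pos.2 (by norm_num)
    have hu' : ((N:ℝ)*p/k)^k * ((N:ℝ)*q/m)^m = c * (p^k * q^m) / (a * b) :=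
      eq_div_iff (by positivity) |>.2 hu
    rw [hu']
    field_simp
    linear_combination (-π) * hsq2 + (-(Real.sqrt 2 ^ 2)) * hπ2
  have hrle := ratio_le_one N k m hk hm hN p q hp hq hpq
  have hfinal : (N.choose k : ℝ) * (p^k * q^m) ≤
      (e/(2*π)) * Real.sqrt ((N:ℝ)/((k:ℝ)*(m:ℝ))) * (((N:ℝ)*p/k)^k * ((N:ℝ)*q/m)^m) := by
    rw [← hid]
    exact mul_le_mul_of_nonneg_right hchoose_le (by positivity)
  calc (N.choose k : ℝ) * p^k * q^m = (N.choose k : ℝ) * (p^k * q^m) := by ring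
    _ ≤ _ := hfinal
    _ ≤ (e/(2*π)) * Real.sqrt ((N:ℝ)/((k:ℝ)*(m:ℝ))) * 1 :=
        mul_le_mul_of_nonneg_left hrle (by positivity)
    _ = (e/(2*π)) * Real.sqrt ((N:ℝ)/((k:ℝ)*(m:ℝ))) := mul_one _

lemma binom_var (N : ℕ) (hN : 0 < N) (p : ℝ) (hp : p ∈ Set.Ioo (0:ℝ) 1) :
    ∑ k ∈ range (N+1), ((N:ℝ)*p - k)^2 * ((N.choose k : ℝ) * p^k * (1-p)^(N-k))
      = (N:ℝ) * (p * (1-p)) := by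
  set x : unitInterval := ⟨p, hp.1.le, hp.2.le⟩ with hx
  have hN' : (0:ℝ) < N := by exact_mod_cast hN
  have h := bernstein.variance (n := N) hN.ne' x
  simp only [bernstein.z] at h
  rw [Fin.sum_univ_eq_sum_range
    (fun k : ℕ => (((x:ℝ)) - (k:ℝ)/(N:ℝ))^2 * (bernstein N k) x) (N+1)] at h
  have hxp : (x : ℝ) = p := rfl
  rw [hxp] at h
  have h2 : ∑ k ∈ range (N+1), ((N:ℝ)*p - k)^2 * ((N.choose k : ℝ) * p^k * (1-p)^(N-k))
      = (N:ℝ)^2 * ∑ k ∈ range (N+1), (p - (k:ℝ)/(N:ℝ))^2 * (bernstein N k) x := by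
    rw [Finset.mul_sum]
    refine Finset.sum_congr rfl fun k hk => ?_
    rw [bernstein_apply, hxp]
    have e1 : (p - (k:ℝ)/(N:ℝ))^2 = ((N:ℝ)*p - k)^2 / (N:ℝ)^2 := by
      rw [← div_pow]
      congr 1
      field_simp
    rw [e1]
    field_simp
  rw [h2, h]
  field_simp

lemma pmf_le_main (N k : ℕ) (hN : 0 < N) (hkN : k ≤ N) (p : ℝ) (hp : p ∈ Set.Ioo (0:ℝ) 1)
    (h8 : 8 ≤ (N:ℝ) * (p * (1-p))) :
    (N.choose k : ℝ) * p^k * (1-p)^(N-k)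
      ≤ 2 * Real.sqrt 2 / Real.sqrt ((N:ℝ) * (p * (1-p))) := by
  obtain ⟨hp0, hp1⟩ := hp
  have hq0 : 0 < 1 - p := by linarith
  set q : ℝ := 1 - p with hqdef
  clear_value q
  have hN' : (0:ℝ) < N := by exact_mod_cast hN
  have hNpq : (0:ℝ) < (N:ℝ) * (p*q) := by positivity
  set s : ℝ := Real.sqrt ((N:ℝ) * (p*q)) with hs
  clear_value s
  have hspos : 0 < s := by rw [hs]; exact Real.sqrt_pos.2 hNpq
  have hs2 : s^2 = (N:ℝ)*(p*q) := by rw [hs]; exact Real.sq_sqrt hNpq.le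
  have hsqrt2 : Real.sqrt 2 * Real.sqrt 2 = 2 := Real.mul_self_sqrt (by norm_num)
  have hsge : 2 * Real.sqrt 2 ≤ s := by
    have h4 : Real.sqrt 4 = 2 := by
      rw [show (4:ℝ) = 2^2 by norm_num, Real.sqrt_sq (by norm_num : (0:ℝ) ≤ 2)]
    have h8' : Real.sqrt 8 = 2 * Real.sqrt 2 := by
      rw [show (8:ℝ) = 4*2 by norm_num, Real.sqrt_mul (by norm_num : (0:ℝ) ≤ 4), h4]
    rw [hs]
    calc 2*Real.sqrt 2 = Real.sqrt 8 := h8'.symm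
      _ ≤ Real.sqrt ((N:ℝ)*(p*q)) := Real.sqrt_le_sqrt h8
  by_cases hcase : (N:ℝ)^2 * (p*q) / 41 ≤ (k:ℝ) * ((N:ℝ) - k)
  · -- entropy branch
    have hkm : (0:ℝ) < (k:ℝ) * ((N:ℝ) - k) := lt_of_lt_of_le (by positivity) hcase
    have hk0 : 0 < k := by
      rcases Nat.eq_zero_or_pos k with h | h
      · subst h; norm_num at hkm
      · exact h
    have hkltN : k < N := by
      rcases lt_or_eq_of_le hkN with h | h
      · exact h
      · exfalso; subst h; simp at hkm
    set m := N - k with hm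
    have hmpos : 0 < m := by omega
    have hkmN : k + m = N := by omega
    have hmr : ((N:ℝ) - k) = (m:ℝ) := by
      have : (N:ℝ) = (k:ℝ) + m := by exact_mod_cast hkmN.symm
      linarith
    have hent := pmf_le_entropy N k m hk0 hmpos hkmN p q hp0 hq0 (by rw [hqdef]; ring)
    refine hent.trans ?_
    have hd1 : (N:ℝ)/((k:ℝ)*(m:ℝ)) ≤ 41 / ((N:ℝ)*(p*q)) := by
      rw [div_le_div_iff₀ (by rw [← hmr]; positivity) hNpq]
      rw [hmr] at hcase
      rw [div_le_iff₀ (by norm_num : (0:ℝ) < 41)] at hcase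
      nlinarith [hcase]
    have hd2 : Real.sqrt ((N:ℝ)/((k:ℝ)*(m:ℝ))) ≤ Real.sqrt 41 / s := by
      rw [hs, ← Real.sqrt_div (by norm_num : (0:ℝ) ≤ 41)]
      exact Real.sqrt_le_sqrt hd1
    have heb : Real.exp 1 ≤ 2.7182819 := le_of_lt (by
      have := Real.exp_one_lt_d9; norm_num at this ⊢; linarith)
    have h41 : Real.sqrt 41 ≤ 6.4032 := by
      have : (41:ℝ) ≤ 6.4032^2 := by norm_num
      calc Real.sqrt 41 ≤ Real.sqrt (6.4032^2) := Real.sqrt_le_sqrt this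
        _ = 6.4032 := Real.sqrt_sq (by norm_num)
    have hpi : 3.141592 ≤ π := by linarith [Real.pi_gt_d6]
    have hsq2lb : 1.414 ≤ Real.sqrt 2 := by
      have : (1.414:ℝ)^2 ≤ 2 := by norm_num
      calc (1.414:ℝ) = Real.sqrt (1.414^2) := (Real.sqrt_sq (by norm_num)).symm
        _ ≤ Real.sqrt 2 := Real.sqrt_le_sqrt this
    have hexppos : (0:ℝ) < Real.exp 1 := Real.exp_pos 1
    have hπpos := Real.pi_pos
    calc Real.exp 1/(2*π) * Real.sqrt ((N:ℝ)/((k:ℝ)*(m:ℝ)))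
        ≤ Real.exp 1/(2*π) * (Real.sqrt 41 / s) :=
          mul_le_mul_of_nonneg_left hd2 (by positivity)
      _ = (Real.exp 1 * Real.sqrt 41/(2*π))/s := by ring
      _ ≤ 2 * Real.sqrt 2 / s := by
          rw [div_le_div_iff_of_pos_right hspos, div_le_iff₀ (by positivity)]
          have k1 : Real.exp 1 * Real.sqrt 41 ≤ 2.7182819*6.4032 :=
            mul_le_mul heb h41 (Real.sqrt_nonneg _) (by norm_num)
          have k2 : (1.414:ℝ)*3.141592 ≤ Real.sqrt 2 * π :=
            mul_le_mul hsq2lb hpi (by norm_num) (Real.sqrt_nonneg _)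
          have : 2*Real.sqrt 2*(2*π) = 4*(Real.sqrt 2*π) := by ring
          rw [this]
          linarith [k1, k2]
  · -- Chebyshev branch
    push_neg at hcase
    have hvar := binom_var N hN p ⟨hp0, hp1⟩
    set A : ℝ := (N.choose k : ℝ) * p^k * q^(N-k) with hA
    clear_value A
    have hApos : 0 < A := by
      rw [hA]
      have : (0:ℝ) < (N.choose k : ℝ) := by
        exact_mod_cast Nat.choose_pos hkN
      positivity
    have hterm : ((N:ℝ)*p - k)^2 * A ≤ (N:ℝ)*(p*q) := by
      rw [hA, hqdef, ← hvar]
      exact Finset.single_le_sum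
        (f := fun j => ((N:ℝ)*p - j)^2 * ((N.choose j : ℝ) * p^j * (1-p)^(N-j)))
        (fun j _ => mul_nonneg (sq_nonneg _) (mul_nonneg (mul_nonneg (Nat.cast_nonneg _)
          (pow_nonneg hp0.le _)) (pow_nonneg (by linarith) _)))
        (Finset.mem_range.2 (by omega))
    have hkler : (k:ℝ) ≤ (N:ℝ) := by exact_mod_cast hkN
    have hkr : (0:ℝ) ≤ (k:ℝ) := Nat.cast_nonneg k
    have hpq1 : p + q = 1 := by rw [hqdef]; ring
    have hid2 : ((N:ℝ)*p - k)*((N:ℝ)*q - k) = (N:ℝ)^2*(p*q) - (k:ℝ)*((N:ℝ)-k) := by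
      rw [hqdef]; ring
    have hprodge : (40/41) * ((N:ℝ)^2*(p*q)) ≤ ((N:ℝ)*p - k) * ((N:ℝ)*q - k) := by
      rw [hid2]; linarith [hcase.le]
    have hq1 : q ≤ 1 := by rw [hqdef]; linarith
    have hNqN : (N:ℝ)*q ≤ (N:ℝ) := mul_le_of_le_one_right hN'.le hq1
    have hNq0 : (0:ℝ) ≤ (N:ℝ)*q := by positivity
    have habs : ((N:ℝ)*q - k)^2 ≤ (N:ℝ)^2 := by
      have e1 : (0:ℝ) ≤ (N:ℝ) - ((N:ℝ)*q - k) := by linarith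
      have e2 : (0:ℝ) ≤ (N:ℝ) + ((N:ℝ)*q - k) := by linarith
      nlinarith [mul_nonneg e1 e2]
    have hB : (40/41)^2 * ((N:ℝ)*(p*q))^2 ≤ ((N:ℝ)*p - k)^2 := by
      have h1 : ((40/41) * ((N:ℝ)^2*(p*q)))^2 ≤ (((N:ℝ)*p - k) * ((N:ℝ)*q - k))^2 :=
        pow_le_pow_left₀ (by positivity) hprodge 2
      have h2 : (((N:ℝ)*p - k) * ((N:ℝ)*q - k))^2 = ((N:ℝ)*p - k)^2 * ((N:ℝ)*q - k)^2 :=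
        mul_pow _ _ 2
      have h3 : ((40/41) * ((N:ℝ)^2*(p*q)))^2 ≤ (((N:ℝ)*p - k))^2 * (N:ℝ)^2 := by
        have h4 := mul_le_mul_of_nonneg_left habs (sq_nonneg ((N:ℝ)*p - k))
        rw [h2] at h1
        exact h1.trans h4
      rw [← mul_le_mul_iff_of_pos_right (pow_pos hN' 2)]
      calc (40/41)^2 * ((N:ℝ)*(p*q))^2 * (N:ℝ)^2
          = ((40/41) * ((N:ℝ)^2*(p*q)))^2 := by ring
        _ ≤ ((N:ℝ)*p - k)^2 * (N:ℝ)^2 := h3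
    have h6 : (40/41)^2 * ((N:ℝ)*(p*q))^2 * A ≤ (N:ℝ)*(p*q) :=
      le_trans (mul_le_mul_of_nonneg_right hB hApos.le) hterm
    have hfin : A * ((N:ℝ)*(p*q)) ≤ (41/40)^2 := by
      rw [← mul_le_mul_iff_of_pos_right (show (0:ℝ) < (40/41)^2*((N:ℝ)*(p*q)) by positivity)]
      calc A*((N:ℝ)*(p*q))*((40/41)^2*((N:ℝ)*(p*q))) = (40/41)^2*((N:ℝ)*(p*q))^2*A := by ring
        _ ≤ (N:ℝ)*(p*q) := h6
        _ = (41/40)^2*((40/41)^2*((N:ℝ)*(p*q))) := by ring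
    rw [le_div_iff₀ hspos]
    have h2s : (41/40)^2 ≤ 2 * Real.sqrt 2 * s := by
      have h := mul_le_mul_of_nonneg_left hsge (show (0:ℝ) ≤ 2*Real.sqrt 2 by positivity)
      have e : 2*Real.sqrt 2*(2*Real.sqrt 2) = 8 := by
        calc 2*Real.sqrt 2*(2*Real.sqrt 2) = 4*(Real.sqrt 2*Real.sqrt 2) := by ring
          _ = 8 := by rw [hsqrt2]; norm_num
      rw [e] at h
      exact le_trans (by norm_num) h
    have hfin2 : A * s * s ≤ 2*Real.sqrt 2 * s := by
      calc A*s*s = A*((N:ℝ)*(p*q)) := by rw [← hs2]; ring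
        _ ≤ (41/40)^2 := hfin
        _ ≤ 2*Real.sqrt 2*s := h2s
    exact le_of_mul_le_mul_right hfin2 hspos

open Finset

/-- Probabilistic Sperner estimate: for iid Bernoulli(p) variables, the probability
of an antichain `A ⊆ {0,1}^N` is at most `2√2 / (√(p(1-p)) √N)`. -/
theorem antichain_prob_le (N : ℕ) (hN : 0 < N) (p : ℝ) (hp : p ∈ Set.Ioo (0:ℝ) 1)
    (A : Finset (Fin N → Bool))
    (hA : IsAntichain (· ≤ ·) (A : Set (Fin N → Bool))) :
    ∑ η ∈ A,
        p ^ (Finset.univ.filter (fun j => η j = true)).card *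
          (1 - p) ^ (N - (Finset.univ.filter (fun j => η j = true)).card)
      ≤ 2 * Real.sqrt 2 / (Real.sqrt (p * (1 - p)) * Real.sqrt N) := by
  classical
  obtain ⟨hp0, hp1⟩ := hp
  have hq0 : (0:ℝ) < 1 - p := by linarith
  have hN' : (0:ℝ) < N := by exact_mod_cast hN
  have hNpq : (0:ℝ) < (N:ℝ)*(p*(1-p)) := by positivity
  -- rewrite RHS denominator
  have hden : Real.sqrt (p * (1 - p)) * Real.sqrt (N:ℝ) = Real.sqrt ((N:ℝ)*(p*(1-p))) := by
    rw [← Real.sqrt_mul (by positivity), mul_comm]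
  rw [hden]
  set M : ℝ := 2 * Real.sqrt 2 / Real.sqrt ((N:ℝ)*(p*(1-p))) with hM
  have hMpos : 0 < M := by rw [hM]; positivity
  -- transfer to finsets
  set f : (Fin N → Bool) → Finset (Fin N) := fun η => Finset.univ.filter (fun j => η j = true)
    with hf
  have hfinj : Function.Injective f := by
    intro a b hab
    funext j
    have := Finset.ext_iff.1 hab j
    simp only [hf, Finset.mem_filter, Finset.mem_univ, true_and] at this
    cases ha : a j <;> cases hb : b j <;> simp [ha, hb] at this ⊢
  have hmono : ∀ a b : Fin N → Bool, f a ⊆ f b → a ≤ b := by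
    intro a b hab
    intro j
    rw [Bool.le_iff_imp]
    intro haj
    have : j ∈ f a := by simp [hf, haj]
    have := hab this
    simp [hf] at this
    exact this
  set B : Finset (Finset (Fin N)) := A.image f with hB
  have hBanti : IsAntichain (· ⊆ ·) (B : Set (Finset (Fin N))) := by
    intro s hs t ht hst hsub
    simp only [hB, Finset.coe_image, Set.mem_image, Finset.mem_coe] at hs ht
    obtain ⟨a, ha, rfl⟩ := hs
    obtain ⟨b, hb, rfl⟩ := ht
    have hab : a ≠ b := fun h => hst (by rw [h])
    exact hA ha hb hab (hmono a b hsub)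
  -- sum over A = sum over B
  have hsum1 : ∑ η ∈ A, p ^ (f η).card * (1-p) ^ (N - (f η).card)
      = ∑ s ∈ B, p ^ s.card * (1-p) ^ (N - s.card) := by
    rw [hB, Finset.sum_image (fun a _ b _ h => hfinj h)]
  -- fiberwise by card
  have hsum2 : ∑ s ∈ B, p ^ s.card * (1-p) ^ (N - s.card)
      = ∑ r ∈ range (N+1), ((B # r).card : ℝ) * (p ^ r * (1-p) ^ (N - r)) := by
    rw [← Finset.sum_fiberwise_of_maps_to (g := Finset.card) (t := range (N+1))
      (fun s _ => Finset.mem_range.2 (Nat.lt_succ_of_le (by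
        simpa using Finset.card_le_univ s)))]
    refine Finset.sum_congr rfl fun r hr => ?_
    have : ∀ s ∈ B.filter (fun s => s.card = r),
        p ^ s.card * (1-p) ^ (N - s.card) = p ^ r * (1-p) ^ (N - r) := by
      intro s hs
      rw [(Finset.mem_filter.1 hs).2]
    rw [Finset.sum_congr rfl this, Finset.sum_const, nsmul_eq_mul]
    rfl
  rw [hsum1, hsum2]
  have hcard : Fintype.card (Fin N) = N := Fintype.card_fin N
  -- LYM
  have hLYM : ∑ r ∈ range (N+1), ((B # r).card : ℝ) / (N.choose r) ≤ 1 := by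
    have := Finset.sum_card_slice_div_choose_le_one (𝕜 := ℝ) hBanti
    rwa [hcard] at this
  have hslice_le : ∀ r, ((B # r).card : ℝ) ≤ (N.choose r : ℝ) := by
    intro r
    have hsub : B # r ⊆ Finset.powersetCard r Finset.univ := by
      intro s hs
      exact Finset.mem_powersetCard_univ.2 (Finset.mem_slice.1 hs).2
    have := Finset.card_le_card hsub
    rw [Finset.card_powersetCard, Finset.card_univ, hcard] at this
    exact_mod_cast this
  by_cases h8 : 8 ≤ (N:ℝ)*(p*(1-p))
  · -- main case
    have step1 : ∑ r ∈ range (N+1), ((B # r).card : ℝ) * (p ^ r * (1-p) ^ (N - r))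
        ≤ ∑ r ∈ range (N+1), (((B # r).card : ℝ) / (N.choose r)) * M := by
      refine Finset.sum_le_sum fun r hr => ?_
      have hrN : r ≤ N := Nat.lt_succ_iff.1 (Finset.mem_range.1 hr)
      have hch : (0:ℝ) < (N.choose r : ℝ) := by exact_mod_cast Nat.choose_pos hrN
      have hpmf := pmf_le_main N r hN hrN p ⟨hp0, hp1⟩ h8
      calc ((B # r).card : ℝ) * (p ^ r * (1-p) ^ (N - r))
          = (((B # r).card : ℝ) / (N.choose r)) * ((N.choose r : ℝ) * p ^ r * (1-p) ^ (N - r)) := by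
            field_simp
        _ ≤ (((B # r).card : ℝ) / (N.choose r)) * M :=
            mul_le_mul_of_nonneg_left hpmf (by positivity)
    refine step1.trans ?_
    rw [← Finset.sum_mul]
    calc (∑ r ∈ range (N+1), ((B # r).card : ℝ) / (N.choose r)) * M
        ≤ 1 * M := mul_le_mul_of_nonneg_right hLYM hMpos.le
      _ = M := one_mul M
  · -- trivial case
    push_neg at h8
    have hsum_le : ∑ r ∈ range (N+1), ((B # r).card : ℝ) * (p ^ r * (1-p) ^ (N - r))
        ≤ ∑ r ∈ range (N+1), (N.choose r : ℝ) * (p ^ r * (1-p) ^ (N - r)) :=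
      Finset.sum_le_sum fun r _ => mul_le_mul_of_nonneg_right (hslice_le r) (by positivity)
    have hbinom : ∑ r ∈ range (N+1), (N.choose r : ℝ) * (p ^ r * (1-p) ^ (N - r)) = 1 := by
      calc ∑ r ∈ range (N+1), (N.choose r:ℝ)*(p^r*(1-p)^(N-r))
          = ∑ r ∈ range (N+1), p^r*(1-p)^(N-r)*(N.choose r:ℝ) :=
            Finset.sum_congr rfl fun r _ => by ring
        _ = (p + (1-p))^N := (add_pow p (1-p) N).symm
        _ = 1 := by rw [show p+(1-p) = (1:ℝ) by ring, one_pow]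
    have hM1 : (1:ℝ) ≤ M := by
      rw [hM, le_div_iff₀ (Real.sqrt_pos.2 hNpq), one_mul]
      have h1 : Real.sqrt ((N:ℝ)*(p*(1-p))) ≤ Real.sqrt 8 := Real.sqrt_le_sqrt h8.le
      have h2 : Real.sqrt 8 = 2 * Real.sqrt 2 := by
        rw [show (8:ℝ) = 4*2 by norm_num, Real.sqrt_mul (by norm_num : (0:ℝ) ≤ 4),
          show (4:ℝ) = 2^2 by norm_num, Real.sqrt_sq (by norm_num : (0:ℝ) ≤ 2)]
      linarith
    calc ∑ r ∈ range (N+1), ((B # r).card : ℝ) * (p ^ r * (1-p) ^ (N - r))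
        ≤ 1 := hsum_le.trans hbinom.le
      _ ≤ M := hM1
end

section
/- Let N be a positive integer and let η₁,…,η_N be independent Bernoulli random variables with possibly different parameters, P(η_j = 1) = p_j ∈ (0,1). Set α = min_{1 ≤ j ≤ N} min{ p_j, 1 − p_j } ∈ (0, 1/2]. Then for any antichain A ⊆ {0,1}^N with respect to the coordinatewise partial order, P( (η₁,…,η_N) ∈ A ) ≤ 4 / ( α √N ). Equivalently, Σ_{η ∈ A} Π_{j=1}^N p_j^{η_j} (1−p_j)^{1−η_j} ≤ 4 / ( α √N ). -/
open Finset

private lemma cb_sq (k : ℕ) : Nat.centralBinom k ^ 2 * (2 * k + 1) ≤ 16 ^ k := by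
  induction k with
  | zero => simp [Nat.centralBinom]
  | succ k ih =>
    have h := Nat.succ_mul_centralBinom_succ k
    refine Nat.le_of_mul_le_mul_left ?_ (show 0 < (k+1)^2 by positivity)
    calc (k+1)^2 * (Nat.centralBinom (k+1) ^ 2 * (2*(k+1)+1))
        = ((k+1) * Nat.centralBinom (k+1))^2 * (2*k+3) := by ring
      _ = (2 * (2*k+1) * Nat.centralBinom k)^2 * (2*k+3) := by rw [h]
      _ = (4 * (2*k+1) * (2*k+3)) * (Nat.centralBinom k ^ 2 * (2*k+1)) := by ring
      _ ≤ (4 * (2*k+1) * (2*k+3)) * 16 ^ k := Nat.mul_le_mul_left _ ih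
      _ ≤ ((k+1)^2 * 16) * 16 ^ k := Nat.mul_le_mul_right _ (by nlinarith)
      _ = (k+1)^2 * 16 ^ (k+1) := by ring

private lemma choose_half_sq (m : ℕ) : (m.choose (m / 2)) ^ 2 * (m + 1) ≤ 4 ^ m := by
  rcases Nat.even_or_odd m with ⟨k, hk⟩ | ⟨k, hk⟩
  · subst hk
    have h2 : (k + k) / 2 = k := by omega
    have hcb : (k + k).choose k = Nat.centralBinom k := by
      rw [Nat.centralBinom]; congr 1; ring
    rw [h2, hcb]
    calc Nat.centralBinom k ^ 2 * (k + k + 1) = Nat.centralBinom k ^2 * (2*k+1) := by ring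
      _ ≤ 16 ^ k := cb_sq k
      _ = 4 ^ (k + k) := by
          rw [show (16:ℕ) = 4^2 from rfl, ← pow_mul]; congr 1; omega
  · subst hk
    have h2 : (2*k + 1) / 2 = k := by omega
    rw [h2]
    have hsymm : (2*k+1).choose (k+1) = (2*k+1).choose k := by
      have := Nat.choose_symm (show k+1 ≤ 2*k+1 by omega)
      simpa [show 2*k+1-(k+1) = k by omega] using this.symm
    have hcb : Nat.centralBinom (k+1) = 2 * (2*k+1).choose k := by
      rw [Nat.centralBinom, show 2*(k+1) = (2*k+1)+1 by omega,
        show k+1 = k+1 from rfl, Nat.choose_succ_succ' (2*k+1) k, hsymm]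
      omega
    have h1 := cb_sq (k+1)
    rw [hcb] at h1
    have h3 : 4 * ((2*k+1).choose k ^ 2 * (2*k+1+1)) ≤ 4 * 4 ^ (2*k+1) := by
      calc 4 * ((2*k+1).choose k ^ 2 * (2*k+1+1))
          ≤ (2 * (2*k+1).choose k) ^ 2 * (2*(k+1)+1) := by nlinarith [Nat.zero_le ((2*k+1).choose k ^ 2)]
        _ ≤ 16 ^ (k+1) := h1
        _ = 4 * 4 ^ (2*k+1) := by
            rw [show (16:ℕ) = 4^2 from rfl, ← pow_mul]
            rw [show 2*(k+1) = (2*k+1)+1 by omega, pow_succ]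
            ring
    exact Nat.le_of_mul_le_mul_left h3 (by norm_num)

private lemma choose_half_real (m : ℕ) :
    (m.choose (m / 2) : ℝ) ≤ 2 ^ m / Real.sqrt (m + 1) := by
  have hs : (0:ℝ) < Real.sqrt (m + 1) := Real.sqrt_pos.2 (by positivity)
  rw [le_div_iff₀ hs]
  have h : ((m.choose (m / 2) : ℝ))^2 * ((m:ℝ)+1) ≤ (2:ℝ)^m * (2:ℝ)^m := by
    have := choose_half_sq m
    have h2 : ((m.choose (m/2))^2 * (m+1) : ℝ) ≤ ((4:ℕ)^m : ℝ) := by exact_mod_cast this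
    calc ((m.choose (m / 2) : ℝ))^2 * ((m:ℝ)+1) = (((m.choose (m/2))^2 * (m+1) : ℕ) : ℝ) := by push_cast; ring
      _ ≤ ((4:ℕ)^m : ℝ) := by exact_mod_cast this
      _ = (2:ℝ)^m * (2:ℝ)^m := by push_cast; rw [show (4:ℝ) = 2*2 by norm_num, mul_pow]
  calc (m.choose (m / 2) : ℝ) * Real.sqrt (m + 1)
      = Real.sqrt (((m.choose (m / 2) : ℝ))^2 * ((m:ℝ)+1)) := by
        rw [Real.sqrt_mul (sq_nonneg _), Real.sqrt_sq (Nat.cast_nonneg _)]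
    _ ≤ Real.sqrt ((2:ℝ)^m * (2:ℝ)^m) := Real.sqrt_le_sqrt h
    _ = 2 ^ m := Real.sqrt_mul_self (by positivity)

private lemma bern_var (n : ℕ) (x : ℝ) :
    ∑ m ∈ range (n+1), (n.choose m : ℝ) * x^m * (1-x)^(n-m) * ((m:ℝ) - n*x)^2
      = n * x * (1-x) := by
  have h := congrArg (Polynomial.eval x) (bernsteinPolynomial.variance ℝ n)
  simp only [Polynomial.eval_finset_sum, Polynomial.eval_mul, Polynomial.eval_pow,
    Polynomial.eval_sub, Polynomial.eval_smul, Polynomial.eval_natCast, Polynomial.eval_X,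
    Polynomial.eval_one, bernsteinPolynomial, smul_eq_mul, nsmul_eq_mul] at h
  rw [← h]
  exact Finset.sum_congr rfl fun m _ => by ring


private lemma slice_card_le {N : ℕ} (A : Finset (Fin N → Bool))
    (hA : IsAntichain (· ≤ ·) (A : Set (Fin N → Bool)))
    (t : Finset (Fin N)) (d : Fin N → Bool) (B : Finset (Fin N → Bool))
    (hBA : B ⊆ A) (hBd : ∀ η ∈ B, ∀ j ∈ t, η j = d j) :
    B.card ≤ (N - t.card).choose ((N - t.card) / 2) := by
  classical
  set Φ : (Fin N → Bool) → Finset {j : Fin N // j ∉ t} :=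
    fun η => univ.filter fun j => η j.1 = true with hΦ
  have hinj : Set.InjOn Φ B := by
    intro η hη η' hη' hee
    funext j
    by_cases hj : j ∈ t
    · rw [hBd η hη j hj, hBd η' hη' j hj]
    · have h1 : ((⟨j, hj⟩ : {j // j ∉ t}) ∈ Φ η) ↔ ((⟨j, hj⟩ : {j // j ∉ t}) ∈ Φ η') := by
        rw [hee]
      simp only [hΦ, mem_filter, mem_univ, true_and] at h1
      cases hj1 : η j <;> cases hj2 : η' j <;> simp_all
  have hcard : B.card = (B.image Φ).card := (card_image_of_injOn hinj).symm
  have hanti : IsAntichain (· ⊆ ·) ((B.image Φ : Finset (Finset {j : Fin N // j ∉ t})) :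
      Set (Finset {j : Fin N // j ∉ t})) := by
    intro s hs s' hs' hne hss
    simp only [coe_image, Set.mem_image, mem_coe] at hs hs'
    obtain ⟨η, hη, rfl⟩ := hs
    obtain ⟨η', hη', rfl⟩ := hs'
    have hle : η ≤ η' := by
      intro j
      by_cases hj : j ∈ t
      · rw [hBd η hη j hj, hBd η' hη' j hj]
      · cases hb : η j with
        | false => exact Bool.false_le _
        | true =>
          have hmem : (⟨j, hj⟩ : {j // j ∉ t}) ∈ Φ η := by
            simp only [hΦ, mem_filter, mem_univ, true_and]; exact hb
          have := hss hmem
          simp only [hΦ, mem_filter, mem_univ, true_and] at this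
          simp [hb, this]
    have hne' : η ≠ η' := fun h => hne (by rw [h])
    exact hA (hBA hη) (hBA hη') hne' hle
  have hsp := IsAntichain.sperner hanti
  have hcard2 : Fintype.card {j : Fin N // j ∉ t} = N - t.card := by
    rw [Fintype.card_subtype_compl, Fintype.card_coe, Fintype.card_fin]
  rw [hcard2] at hsp
  omega

private lemma key_t {N : ℕ} (A : Finset (Fin N → Bool))
    (hA : IsAntichain (· ≤ ·) (A : Set (Fin N → Bool)))
    (ν : Fin N → Bool → ℝ) (hν0 : ∀ j b, 0 ≤ ν j b)
    (hν1 : ∀ j, ν j true + ν j false = 1)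
    (t : Finset (Fin N)) :
    ∑ η ∈ A, ∏ j ∈ t, ν j (η j) ≤ ((N - t.card).choose ((N - t.card) / 2) : ℝ) := by
  classical
  set r : (Fin N → Bool) → (Fin N → Bool) := fun η j => if j ∈ t then η j else false with hr
  set g : Fin N → Bool → ℝ := fun j b => if j ∈ t then ν j b else (if b then 0 else 1) with hg
  have hG0 : ∀ d : Fin N → Bool, 0 ≤ ∏ j, g j (d j) := by
    intro d
    refine prod_nonneg fun j _ => ?_
    by_cases hj : j ∈ t <;> cases hd : d j <;> simp [hg, hj, hν0]
  have step1 : ∑ η ∈ A, ∏ j ∈ t, ν j (η j)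
      = ∑ d : Fin N → Bool, ∑ η ∈ A.filter fun η => r η = d, ∏ j ∈ t, ν j (η j) :=
    (Finset.sum_fiberwise A r _).symm
  have step2 : ∀ d : Fin N → Bool, ∑ η ∈ A.filter (fun η => r η = d), ∏ j ∈ t, ν j (η j)
      = ((A.filter fun η => r η = d).card : ℝ) * ∏ j, g j (d j) := by
    intro d
    rw [Finset.sum_congr rfl (fun η hη => ?_), Finset.sum_const, nsmul_eq_mul]
    have hd : r η = d := (mem_filter.1 hη).2
    rw [← hd]
    rw [← Finset.prod_filter_mul_prod_filter_not univ (· ∈ t) (fun j => g j (r η j))]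
    have e1 : ∏ j ∈ univ.filter (· ∈ t), g j (r η j) = ∏ j ∈ t, ν j (η j) := by
      refine Finset.prod_congr (by ext j; simp) fun j hj => ?_
      simp [hg, hr, hj]
    have e2 : ∏ j ∈ univ.filter (fun j => ¬ j ∈ t), g j (r η j) = 1 := by
      refine Finset.prod_eq_one fun j hj => ?_
      simp only [mem_filter, mem_univ, true_and] at hj
      simp [hg, hr, hj]
    rw [e1, e2, mul_one]
  have step3 : ∀ d : Fin N → Bool,
      ((A.filter fun η => r η = d).card : ℝ) * ∏ j, g j (d j)
        ≤ ((N - t.card).choose ((N - t.card) / 2) : ℝ) * ∏ j, g j (d j) := by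
    intro d
    refine mul_le_mul_of_nonneg_right ?_ (hG0 d)
    have := slice_card_le A hA t d (A.filter fun η => r η = d) (filter_subset _ _) ?_
    · exact_mod_cast this
    · intro η hη j hj
      have hd : r η = d := (mem_filter.1 hη).2
      rw [← hd]; simp [hr, hj]
  have step4 : ∑ d : Fin N → Bool, ∏ j, g j (d j) = 1 := by
    have h1 : ∑ d ∈ Fintype.piFinset (fun _ : Fin N => (univ : Finset Bool)), ∏ j, g j (d j)
        = ∏ j, ∑ b : Bool, g j b := (Finset.prod_univ_sum _ _).symm
    rw [Fintype.piFinset_univ] at h1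
    rw [h1]
    have h2 : ∀ j, ∑ b : Bool, g j b = 1 := by
      intro j
      rw [Fintype.sum_bool]
      by_cases hj : j ∈ t <;> simp [hg, hj, hν1 j]
    exact Finset.prod_eq_one fun j _ => h2 j
  calc ∑ η ∈ A, ∏ j ∈ t, ν j (η j)
      = ∑ d : Fin N → Bool, ((A.filter fun η => r η = d).card : ℝ) * ∏ j, g j (d j) := by
        rw [step1]; exact Finset.sum_congr rfl fun d _ => step2 d
    _ ≤ ∑ d : Fin N → Bool, ((N - t.card).choose ((N - t.card) / 2) : ℝ) * ∏ j, g j (d j) :=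
        Finset.sum_le_sum fun d _ => step3 d
    _ = ((N - t.card).choose ((N - t.card) / 2) : ℝ) * ∑ d : Fin N → Bool, ∏ j, g j (d j) := by
        rw [← mul_sum]
    _ = _ := by rw [step4, mul_one]


set_option maxHeartbeats 1000000 in
/-- Extended probabilistic Sperner estimate for independent, not necessarily
identically distributed, Bernoulli variables with parameters `p j ∈ (0,1)`:
with `α = min_j min(p j, 1 - p j)`, the probability of an antichain
`A ⊆ {0,1}^N` is at most `4 / (α √N)`. -/
theorem antichain_prob_le_of_nonid (N : ℕ) (hN : 0 < N)
    (p : Fin N → ℝ) (hp : ∀ j, p j ∈ Set.Ioo (0:ℝ) 1)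
    (α : ℝ) (hα : α = ⨅ j, min (p j) (1 - p j))
    (A : Finset (Fin N → Bool))
    (hA : IsAntichain (· ≤ ·) (A : Set (Fin N → Bool))) :
    ∑ η ∈ A, ∏ j, (if η j then p j else 1 - p j) ≤ 4 / (α * Real.sqrt N) := by
  classical
  have hNpos : (0:ℝ) < N := by exact_mod_cast hN
  have hN1 : (1:ℝ) ≤ N := by exact_mod_cast hN
  have hne : Nonempty (Fin N) := ⟨⟨0, hN⟩⟩
  have hbdd : BddBelow (Set.range fun j => min (p j) (1 - p j)) :=
    (Set.finite_range _).bddBelow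
  have hαle : ∀ j, α ≤ min (p j) (1 - p j) := fun j => hα ▸ ciInf_le hbdd j
  have hα0 : 0 < α := by
    obtain ⟨j₀, hj₀⟩ := Finite.exists_min fun j => min (p j) (1 - p j)
    have heq : α = min (p j₀) (1 - p j₀) := le_antisymm (hαle j₀) (hα ▸ le_ciInf hj₀)
    rw [heq]
    exact lt_min (hp j₀).1 (by linarith [(hp j₀).2])
  have hα2 : α ≤ 1/2 := by
    have h := hαle ⟨0, hN⟩
    have h1 := min_le_left (p ⟨0, hN⟩) (1 - p ⟨0, hN⟩)
    have h2 := min_le_right (p ⟨0, hN⟩) (1 - p ⟨0, hN⟩)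
    linarith
  have h12 : (0:ℝ) ≤ 1 - 2*α := by linarith
  have hαp : ∀ j, α ≤ p j := fun j => (hαle j).trans (min_le_left _ _)
  have hαq : ∀ j, p j ≤ 1 - α := fun j => by
    have := (hαle j).trans (min_le_right _ _); linarith
  -- mixture parameters
  set q : Fin N → ℝ := fun j =>
    if (1:ℝ) - 2*α = 0 then 0 else (p j - α) / (1 - 2*α) with hqdef
  have hqid : ∀ j, p j = α + (1 - 2*α) * q j := by
    intro j
    rw [hqdef]
    by_cases h : (1:ℝ) - 2*α = 0
    · simp only [h, if_pos]
      have : p j = α := le_antisymm (by have := hαq j; linarith) (hαp j)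
      rw [this]; ring
    · simp only [h, if_neg, if_false]
      rw [mul_div_cancel₀ _ h]; ring
  have hq0 : ∀ j, 0 ≤ q j := by
    intro j
    rw [hqdef]
    by_cases h : (1:ℝ) - 2*α = 0
    · simp [h]
    · simp only [h, if_false]
      exact div_nonneg (by linarith [hαp j]) (by cases (lt_or_eq_of_le h12) with
        | inl h' => linarith
        | inr h' => exact absurd h'.symm h)
  have hq1 : ∀ j, q j ≤ 1 := by
    intro j
    rw [hqdef]
    by_cases h : (1:ℝ) - 2*α = 0
    · simp [h]
    · simp only [h, if_false]
      have hpos : 0 < 1 - 2*α := lt_of_le_of_ne h12 (Ne.symm h)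
      rw [div_le_one hpos]
      linarith [hαq j]
  set ν : Fin N → Bool → ℝ := fun j b => if b then q j else 1 - q j with hνdef
  have hν0 : ∀ j b, 0 ≤ ν j b := by
    intro j b; rw [hνdef]; cases b <;> simp [hq0 j, hq1 j] <;> linarith [hq1 j]
  have hν1 : ∀ j, ν j true + ν j false = 1 := by
    intro j; rw [hνdef]; simp
  have hw : ∀ (j : Fin N) (b : Bool),
      (if b then p j else 1 - p j) = (1 - 2*α) * ν j b + α := by
    intro j b
    rw [hνdef]
    cases b
    · simp only [Bool.false_eq_true, if_false]
      rw [hqid j]; ring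
    · simp only [if_pos]
      rw [hqid j]; ring
  -- Step 1: expand the product over subsets
  have step1 : ∑ η ∈ A, ∏ j, (if η j then p j else 1 - p j)
      = ∑ t ∈ (univ : Finset (Fin N)).powerset,
          ∑ η ∈ A, (∏ j ∈ t, (1 - 2*α) * ν j (η j)) * ∏ j ∈ univ \ t, α := by
    rw [Finset.sum_comm]
    refine sum_congr rfl fun η _ => ?_
    rw [← Finset.prod_add]
    exact Finset.prod_congr rfl fun j _ => hw j (η j)
  -- Step 2: factor the constants out
  have step2 : ∀ t : Finset (Fin N),
      ∑ η ∈ A, (∏ j ∈ t, (1 - 2*α) * ν j (η j)) * ∏ j ∈ univ \ t, α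
        = ((1 - 2*α)^t.card * α^(N - t.card)) * ∑ η ∈ A, ∏ j ∈ t, ν j (η j) := by
    intro t
    rw [Finset.mul_sum]
    refine sum_congr rfl fun η _ => ?_
    rw [Finset.prod_mul_distrib, Finset.prod_const, Finset.prod_const,
      card_sdiff_of_subset (subset_univ t), card_univ, Fintype.card_fin]
    ring
  -- Step 3: Sperner bound for each subset
  have step3 : ∑ t ∈ (univ : Finset (Fin N)).powerset,
        ((1 - 2*α)^t.card * α^(N - t.card)) * ∑ η ∈ A, ∏ j ∈ t, ν j (η j)
      ≤ ∑ t ∈ (univ : Finset (Fin N)).powerset,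
          ((1 - 2*α)^t.card * α^(N - t.card)
            * ((N - t.card).choose ((N - t.card) / 2) : ℝ)) := by
    refine sum_le_sum fun t _ => ?_
    exact mul_le_mul_of_nonneg_left (key_t A hA ν hν0 hν1 t)
      (mul_nonneg (pow_nonneg h12 _) (pow_nonneg hα0.le _))
  -- Step 4: group subsets by cardinality
  have step4 : ∑ t ∈ (univ : Finset (Fin N)).powerset,
        ((1 - 2*α)^t.card * α^(N - t.card)
          * ((N - t.card).choose ((N - t.card) / 2) : ℝ))
      = ∑ k ∈ range (N+1), (N.choose k : ℝ) *
          ((1 - 2*α)^k * α^(N - k) * ((N - k).choose ((N - k) / 2) : ℝ)) := by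
    set F : ℕ → ℝ := fun k =>
      (1 - 2*α)^k * α^(N - k) * ((N - k).choose ((N - k) / 2) : ℝ) with hF
    have hmap : ∀ t ∈ (univ : Finset (Fin N)).powerset, t.card ∈ range (N+1) := by
      intro t _
      rw [mem_range]
      have := card_le_card (subset_univ t)
      rw [card_univ, Fintype.card_fin] at this
      omega
    rw [← Finset.sum_fiberwise_of_maps_to' hmap F]
    refine sum_congr rfl fun k _ => ?_
    rw [Finset.sum_const, nsmul_eq_mul]
    congr 1
    rw [← Finset.powersetCard_eq_filter, Finset.card_powersetCard, card_univ, Fintype.card_fin]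
  -- Step 5: reflect the sum
  have step5 : ∑ k ∈ range (N+1), (N.choose k : ℝ) *
        ((1 - 2*α)^k * α^(N - k) * ((N - k).choose ((N - k) / 2) : ℝ))
      = ∑ m ∈ range (N+1), (N.choose m : ℝ) *
          ((1 - 2*α)^(N - m) * α^m * ((m.choose (m / 2)) : ℝ)) := by
    calc ∑ k ∈ range (N+1), (N.choose k : ℝ) *
          ((1 - 2*α)^k * α^(N - k) * ((N - k).choose ((N - k) / 2) : ℝ))
        = ∑ m ∈ range (N+1), (N.choose (N+1-1-m) : ℝ) *
            ((1 - 2*α)^(N+1-1-m) * α^(N - (N+1-1-m))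
              * ((N - (N+1-1-m)).choose ((N - (N+1-1-m)) / 2) : ℝ)) :=
          (Finset.sum_range_reflect _ _).symm
      _ = _ := by
          refine sum_congr rfl fun m hm => ?_
          rw [mem_range] at hm
          have h1 : N + 1 - 1 - m = N - m := by omega
          have h2 : N - (N - m) = m := by omega
          rw [h1, h2, Nat.choose_symm (by omega : m ≤ N)]
  -- Step 6: bound the central binomial coefficient
  have step6 : ∑ m ∈ range (N+1), (N.choose m : ℝ) *
        ((1 - 2*α)^(N - m) * α^m * ((m.choose (m / 2)) : ℝ))
      ≤ ∑ m ∈ range (N+1),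
          ((N.choose m : ℝ) * (2*α)^m * (1 - 2*α)^(N - m)) * (1 / Real.sqrt (m+1)) := by
    refine sum_le_sum fun m _ => ?_
    have hb : ((m.choose (m / 2)) : ℝ) ≤ 2^m / Real.sqrt (m+1) := choose_half_real m
    have hss : (0:ℝ) < Real.sqrt ((m:ℝ)+1) := Real.sqrt_pos.2 (by positivity)
    calc (N.choose m : ℝ) * ((1 - 2*α)^(N - m) * α^m * ((m.choose (m / 2)) : ℝ))
        ≤ (N.choose m : ℝ) * ((1 - 2*α)^(N - m) * α^m * (2^m / Real.sqrt (m+1))) := by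
          refine mul_le_mul_of_nonneg_left ?_ (Nat.cast_nonneg _)
          exact mul_le_mul_of_nonneg_left hb
            (mul_nonneg (pow_nonneg h12 _) (pow_nonneg hα0.le _))
      _ = ((N.choose m : ℝ) * (2*α)^m * (1 - 2*α)^(N - m)) * (1 / Real.sqrt (m+1)) := by
          rw [mul_pow]; ring
  -- Step 7: pointwise Chebyshev-type bound
  have hD : (0:ℝ) < α * N := mul_pos hα0 hNpos
  have hpt : ∀ m : ℕ, 1 / Real.sqrt ((m:ℝ)+1)
      ≤ 1 / Real.sqrt (α*N) + ((m:ℝ) - N*(2*α))^2 / (α*N)^2 := by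
    intro m
    have hm0 : (0:ℝ) ≤ (m:ℝ) := Nat.cast_nonneg m
    have hsq : (0:ℝ) < Real.sqrt (α*N) := Real.sqrt_pos.2 hD
    have hsm : (0:ℝ) < Real.sqrt ((m:ℝ)+1) := Real.sqrt_pos.2 (by positivity)
    by_cases hc : α*(N:ℝ) ≤ (m:ℝ)+1
    · have h1 : 1 / Real.sqrt ((m:ℝ)+1) ≤ 1 / Real.sqrt (α*N) :=
        one_div_le_one_div_of_le hsq (Real.sqrt_le_sqrt hc)
      have h2 : (0:ℝ) ≤ ((m:ℝ) - N*(2*α))^2 / (α*N)^2 := by positivity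
      linarith
    · push_neg at hc
      have hm : (m:ℝ) < α*N := by linarith
      have h1 : (α*N)^2 ≤ ((m:ℝ) - N*(2*α))^2 := by nlinarith
      have h2 : (1:ℝ) ≤ ((m:ℝ) - N*(2*α))^2 / (α*N)^2 := by
        rw [le_div_iff₀ (by positivity)]; linarith
      have h3 : 1 / Real.sqrt ((m:ℝ)+1) ≤ 1 := by
        rw [div_le_one hsm]
        calc (1:ℝ) = Real.sqrt 1 := Real.sqrt_one.symm
          _ ≤ _ := Real.sqrt_le_sqrt (by linarith)
      have h4 : (0:ℝ) ≤ 1 / Real.sqrt (α*N) := by positivity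
      linarith
  have step7 : ∑ m ∈ range (N+1),
        ((N.choose m : ℝ) * (2*α)^m * (1 - 2*α)^(N - m)) * (1 / Real.sqrt (m+1))
      ≤ ∑ m ∈ range (N+1), ((N.choose m : ℝ) * (2*α)^m * (1 - 2*α)^(N - m)) *
          (1 / Real.sqrt (α*N) + ((m:ℝ) - N*(2*α))^2 / (α*N)^2) := by
    refine sum_le_sum fun m _ => ?_
    refine mul_le_mul_of_nonneg_left (hpt m) ?_
    have : (0:ℝ) ≤ (2*α)^m := by positivity
    exact mul_nonneg (mul_nonneg (Nat.cast_nonneg _) this) (pow_nonneg h12 _)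
  -- Step 8: compute the two sums
  have hsum1 : ∑ m ∈ range (N+1), (N.choose m : ℝ) * (2*α)^m * (1 - 2*α)^(N - m) = 1 := by
    have h := add_pow (2*α) (1 - 2*α) N
    rw [show (2*α) + (1 - 2*α) = (1:ℝ) by ring, one_pow] at h
    calc ∑ m ∈ range (N+1), (N.choose m : ℝ) * (2*α)^m * (1 - 2*α)^(N - m)
        = ∑ m ∈ range (N+1), (2*α)^m * (1 - 2*α)^(N - m) * (N.choose m : ℝ) :=
          sum_congr rfl fun m _ => by ring
      _ = 1 := h.symm
  have hsum2 : ∑ m ∈ range (N+1),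
        (N.choose m : ℝ) * (2*α)^m * (1 - 2*α)^(N - m) * (((m:ℝ) - N*(2*α))^2)
      = N * (2*α) * (1 - 2*α) := by
    rw [← bern_var N (2*α)]
  have step8 : ∑ m ∈ range (N+1), ((N.choose m : ℝ) * (2*α)^m * (1 - 2*α)^(N - m)) *
        (1 / Real.sqrt (α*N) + ((m:ℝ) - N*(2*α))^2 / (α*N)^2)
      = 1 / Real.sqrt (α*N) + (N * (2*α) * (1 - 2*α)) / (α*N)^2 := by
    have e : ∀ m ∈ range (N+1), ((N.choose m : ℝ) * (2*α)^m * (1 - 2*α)^(N - m)) *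
          (1 / Real.sqrt (α*N) + ((m:ℝ) - N*(2*α))^2 / (α*N)^2)
        = (1 / Real.sqrt (α*N)) * ((N.choose m : ℝ) * (2*α)^m * (1 - 2*α)^(N - m))
          + (1 / (α*N)^2) *
            ((N.choose m : ℝ) * (2*α)^m * (1 - 2*α)^(N - m) * (((m:ℝ) - N*(2*α))^2)) := by
      intro m _; ring
    rw [Finset.sum_congr rfl e, Finset.sum_add_distrib, ← Finset.mul_sum, ← Finset.mul_sum,
      hsum1, hsum2]
    ring
  -- Final numeric estimate
  have hsN : Real.sqrt (α*(N:ℝ)) = Real.sqrt α * Real.sqrt N := Real.sqrt_mul hα0.le _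
  have hsα : Real.sqrt α * Real.sqrt α = α := Real.mul_self_sqrt hα0.le
  have hsα1 : Real.sqrt α ≤ 1 := Real.sqrt_le_one.2 (by linarith)
  have hααs : α ≤ Real.sqrt α := by nlinarith [Real.sqrt_nonneg α]
  have hsNpos : (0:ℝ) < Real.sqrt N := Real.sqrt_pos.2 hNpos
  have hsqN : Real.sqrt (N:ℝ) ≤ N := by
    have h := Real.sqrt_le_sqrt (show (N:ℝ) ≤ (N:ℝ)^2 by nlinarith)
    rwa [Real.sqrt_sq hNpos.le] at h
  have hfin : 1 / Real.sqrt (α*N) + (N * (2*α) * (1 - 2*α)) / (α*N)^2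
      ≤ 4 / (α * Real.sqrt N) := by
    have hden : (0:ℝ) < α * Real.sqrt N := mul_pos hα0 hsNpos
    have t1 : 1 / Real.sqrt (α*N) ≤ 1 / (α * Real.sqrt N) := by
      rw [hsN]
      exact one_div_le_one_div_of_le hden (mul_le_mul_of_nonneg_right hααs hsNpos.le)
    have t2a : (N * (2*α) * (1 - 2*α)) / (α*N)^2 ≤ (2*(α*N)) / (α*N)^2 := by
      have hx : (N:ℝ) * (2*α) * (1 - 2*α) ≤ 2*(α*N) := by nlinarith
      exact (div_le_div_iff_of_pos_right (by positivity)).2 hx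
    have t2b : (2*(α*N)) / (α*N)^2 = 2 / (α*N) := by
      field_simp
    have t2c : 2 / (α*(N:ℝ)) ≤ 2 / (α * Real.sqrt N) := by
      exact (div_le_div_iff_of_pos_left (by norm_num) (by positivity) hden).2
        (mul_le_mul_of_nonneg_left hsqN hα0.le)
    have t3 : 1 / (α * Real.sqrt N) + 2 / (α * Real.sqrt N) ≤ 4 / (α * Real.sqrt N) := by
      rw [← add_div]
      exact (div_le_div_iff_of_pos_right hden).2 (by norm_num)
    linarith
  calc ∑ η ∈ A, ∏ j, (if η j then p j else 1 - p j)
      = ∑ t ∈ (univ : Finset (Fin N)).powerset,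
          ((1 - 2*α)^t.card * α^(N - t.card)) * ∑ η ∈ A, ∏ j ∈ t, ν j (η j) := by
        rw [step1]; exact sum_congr rfl fun t _ => step2 t
    _ ≤ _ := step3
    _ = _ := step4
    _ = _ := step5
    _ ≤ _ := step6
    _ ≤ _ := step7
    _ = _ := step8
    _ ≤ _ := hfin
end
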